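/- arXiv:1202.1537 — 10 statements merged into one kernel-verified Lean document; each statement's English description precedes it below -/
import Mathlib

section
/- Let 𝔥 be a nonzero complex Hilbert space and let 𝒫 and ℛ be anti-commuting unitary involutions on 𝔥 (𝒫ℛ = −ℛ𝒫). For complex numbers α₀, α₁, α₂, α₃, the bounded operator J = α₀·I + α₁·𝒫 + α₂·ℛ + α₃·(iℛ𝒫) is a unitary involution different from I and from −I if and only if α₀ = 0, the coefficients α₁, α₂, α₃ are real, and α₁² + α₂² + α₃² = 1. -/
open ContinuousLinearMap
set_option maxHeartbeats 1000000


open scoped InnerProductSpace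

/-- For anti-commuting unitary involutions `𝒫, ℛ` on a nonzero complex Hilbert
space, the operator `J = α₀ I + α₁ 𝒫 + α₂ ℛ + α₃ (iℛ𝒫)` is a unitary involution different from
`±I` iff `α₀ = 0`, the coefficients `α₁, α₂, α₃` are real and `α₁² + α₂² + α₃² = 1`. -/
theorem unitary_involution_in_clifford_iff
    {𝕳 : Type*} [NormedAddCommGroup 𝕳] [InnerProductSpace ℂ 𝕳] [CompleteSpace 𝕳]
    [Nontrivial 𝕳]
    (P R : 𝕳 →L[ℂ] 𝕳)
    (hP2 : ∀ f, P (P f) = f)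
    (hPinner : ∀ f g : 𝕳, ⟪P f, P g⟫_ℂ = ⟪f, g⟫_ℂ)
    (hR2 : ∀ f, R (R f) = f)
    (hRinner : ∀ f g : 𝕳, ⟪R f, R g⟫_ℂ = ⟪f, g⟫_ℂ)
    (hanti : P ∘L R = -(R ∘L P))
    (α₀ α₁ α₂ α₃ : ℂ)
    (J : 𝕳 →L[ℂ] 𝕳)
    (hJ : J = α₀ • (1 : 𝕳 →L[ℂ] 𝕳) + α₁ • P + α₂ • R + α₃ • (Complex.I • (R ∘L P))) :
    ((∀ f, J (J f) = f) ∧ (∀ f g : 𝕳, ⟪J f, J g⟫_ℂ = ⟪f, g⟫_ℂ) ∧ J ≠ 1 ∧ J ≠ -1)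
      ↔ (α₀ = 0 ∧ α₁.im = 0 ∧ α₂.im = 0 ∧ α₃.im = 0 ∧ α₁ ^ 2 + α₂ ^ 2 + α₃ ^ 2 = 1) := by
  set q : 𝕳 →L[ℂ] 𝕳 := Complex.I • (R ∘L P) with hq_def
  have hJ' : J = α₀ • (1 : 𝕳 →L[ℂ] 𝕳) + α₁ • P + α₂ • R + α₃ • q := hJ
  clear hJ
  have hp : P * P = 1 := by ext f; exact hP2 f
  have hr : R * R = 1 := by ext f; exact hR2 f
  have hpr : P * R = -(R * P) := hanti
  have hRP : R * P = (-Complex.I) • q := by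
    rw [hq_def]; show R * P = (-Complex.I) • (Complex.I • (R * P))
    rw [smul_smul]; simp [Complex.I_mul_I]
  have hPR : P * R = Complex.I • q := by rw [hpr, hRP]; module
  have hPq : P * q = (-Complex.I) • R := by
    rw [hq_def]; show P * (Complex.I • (R * P)) = _
    rw [mul_smul_comm, ← mul_assoc, hpr, neg_mul, mul_assoc, hp, mul_one]; module
  have hqP : q * P = Complex.I • R := by
    rw [hq_def]; show (Complex.I • (R * P)) * P = _
    rw [smul_mul_assoc, mul_assoc, hp, mul_one]
  have hRq : R * q = Complex.I • P := by
    rw [hq_def]; show R * (Complex.I • (R * P)) = _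
    rw [mul_smul_comm, ← mul_assoc, hr, one_mul]
  have hqR : q * R = (-Complex.I) • P := by
    rw [hq_def]; show (Complex.I • (R * P)) * R = _
    rw [smul_mul_assoc, mul_assoc, hpr, mul_neg, ← mul_assoc, hr, one_mul]; module
  have hqq : q * q = 1 := by
    rw [hq_def]; show (Complex.I • (R * P)) * (Complex.I • (R * P)) = 1
    rw [smul_mul_assoc, mul_smul_comm, smul_smul, Complex.I_mul_I, mul_assoc,
      ← mul_assoc P R, hpr]
    simp [mul_assoc, hp, hr, ← mul_assoc, neg_mul]
  have hRPR : R * (P * R) = -P := by rw [hpr, mul_neg, ← mul_assoc, hr, one_mul]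
  -- nontrivial vector
  obtain ⟨x, hx⟩ := exists_ne (0 : 𝕳)
  have hPx : P x ≠ 0 := fun h0 => hx (by rw [← hP2 x, h0, map_zero])
  have hqx : q x ≠ 0 := by
    intro h0
    apply hx
    have : (q * q) x = x := by rw [hqq]; rfl
    change q (q x) = x at this; rw [h0, map_zero] at this; exact this.symm
  -- independence
  have key : ∀ a b c d : ℂ,
      a • (1 : 𝕳 →L[ℂ] 𝕳) + b • P + c • R + d • q = 0 →
      a = 0 ∧ b = 0 ∧ c = 0 ∧ d = 0 := by
    intro a b c d h
    -- anticommutator with P kills R and q parts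
    have hA : (2 * b) • (1 : 𝕳 →L[ℂ] 𝕳) + (2 * a) • P = 0 := by
      have : (2 * b) • (1 : 𝕳 →L[ℂ] 𝕳) + (2 * a) • P =
          P * (a • (1 : 𝕳 →L[ℂ] 𝕳) + b • P + c • R + d • q)
            + (a • (1 : 𝕳 →L[ℂ] 𝕳) + b • P + c • R + d • q) * P := by
        simp only [mul_add, add_mul, mul_smul_comm, smul_mul_assoc, hp, hPR, hRP, hPq, hqP,
          mul_one, one_mul, smul_smul]
        module
      rw [this, h, mul_zero, zero_mul, add_zero]
    -- conjugate by R flips the P part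
    have hB : (2 * b) • (1 : 𝕳 →L[ℂ] 𝕳) + (-(2 * a)) • P = 0 := by
      have : (2 * b) • (1 : 𝕳 →L[ℂ] 𝕳) + (-(2 * a)) • P =
          R * (((2 * b) • (1 : 𝕳 →L[ℂ] 𝕳) + (2 * a) • P) * R) := by
        simp only [mul_add, add_mul, mul_smul_comm, smul_mul_assoc, hr, hRPR, mul_one,
          one_mul, mul_assoc]
        module
      rw [this, hA, zero_mul, mul_zero]
    have hb : b = 0 := by
      have hsum : (4 * b) • (1 : 𝕳 →L[ℂ] 𝕳) = 0 := by
        have : (4 * b) • (1 : 𝕳 →L[ℂ] 𝕳) =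
            ((2 * b) • (1 : 𝕳 →L[ℂ] 𝕳) + (2 * a) • P)
              + ((2 * b) • (1 : 𝕳 →L[ℂ] 𝕳) + (-(2 * a)) • P) := by module
        rw [this, hA, hB, add_zero]
      have := congrArg (fun T : 𝕳 →L[ℂ] 𝕳 => T x) hsum
      simp only [smul_apply, one_apply, zero_apply] at this
      rcases smul_eq_zero.mp this with h' | h'
      · linear_combination h' / 4
      · exact absurd h' hx
    have ha : a = 0 := by
      rw [hb, mul_zero, zero_smul, zero_add] at hA
      have := congrArg (fun T : 𝕳 →L[ℂ] 𝕳 => T x) hA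
      simp only [smul_apply, zero_apply] at this
      rcases smul_eq_zero.mp this with h' | h'
      · linear_combination h' / 2
      · exact absurd h' hPx
    -- now only R and q parts
    have h' : c • R + d • q = 0 := by
      rw [ha, hb] at h; simpa using h
    have hC : c • (1 : 𝕳 →L[ℂ] 𝕳) + (Complex.I * d) • P = 0 := by
      have : c • (1 : 𝕳 →L[ℂ] 𝕳) + (Complex.I * d) • P = R * (c • R + d • q) := by
        simp only [mul_add, mul_smul_comm, hr, hRq, smul_smul]
        module
      rw [this, h', mul_zero]
    have hD : c • (1 : 𝕳 →L[ℂ] 𝕳) + (-(Complex.I * d)) • P = 0 := by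
      have : c • (1 : 𝕳 →L[ℂ] 𝕳) + (-(Complex.I * d)) • P =
          R * ((c • (1 : 𝕳 →L[ℂ] 𝕳) + (Complex.I * d) • P) * R) := by
        simp only [mul_add, add_mul, mul_smul_comm, smul_mul_assoc, hr, hRPR, mul_one,
          one_mul, mul_assoc]
        module
      rw [this, hC, zero_mul, mul_zero]
    have hc : c = 0 := by
      have hsum : (2 * c) • (1 : 𝕳 →L[ℂ] 𝕳) = 0 := by
        have : (2 * c) • (1 : 𝕳 →L[ℂ] 𝕳) =
            (c • (1 : 𝕳 →L[ℂ] 𝕳) + (Complex.I * d) • P)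
              + (c • (1 : 𝕳 →L[ℂ] 𝕳) + (-(Complex.I * d)) • P) := by module
        rw [this, hC, hD, add_zero]
      have := congrArg (fun T : 𝕳 →L[ℂ] 𝕳 => T x) hsum
      simp only [smul_apply, one_apply, zero_apply] at this
      rcases smul_eq_zero.mp this with h'' | h''
      · linear_combination h'' / 2
      · exact absurd h'' hx
    have hd : d = 0 := by
      rw [hc, zero_smul, zero_add] at h'
      have := congrArg (fun T : 𝕳 →L[ℂ] 𝕳 => T x) h'
      simp only [smul_apply, zero_apply] at this
      rcases smul_eq_zero.mp this with h'' | h''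
      · exact h''
      · exact absurd h'' hqx
    exact ⟨ha, hb, hc, hd⟩
  -- product expansion of J with itself
  have Jmul : J * J = (α₀ ^ 2 + α₁ ^ 2 + α₂ ^ 2 + α₃ ^ 2) • (1 : 𝕳 →L[ℂ] 𝕳)
      + (2 * α₀ * α₁) • P + (2 * α₀ * α₂) • R + (2 * α₀ * α₃) • q := by
    rw [hJ']
    simp only [mul_add, add_mul, smul_mul_assoc, mul_smul_comm, smul_smul, hp, hr, hqq,
      hPR, hRP, hPq, hqP, hRq, hqR, mul_one, one_mul]
    module
  -- self-adjointness facts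
  have hPsa : ContinuousLinearMap.adjoint P = P := by
    refine ContinuousLinearMap.ext fun f => ?_
    refine ext_inner_right ℂ fun g => ?_
    calc ⟪(ContinuousLinearMap.adjoint P) f, g⟫_ℂ = ⟪f, P g⟫_ℂ := adjoint_inner_left _ _ _
      _ = ⟪P f, P (P g)⟫_ℂ := (hPinner _ _).symm
      _ = ⟪P f, g⟫_ℂ := by rw [hP2]
  have hRsa : ContinuousLinearMap.adjoint R = R := by
    refine ContinuousLinearMap.ext fun f => ?_
    refine ext_inner_right ℂ fun g => ?_
    calc ⟪(ContinuousLinearMap.adjoint R) f, g⟫_ℂ = ⟪f, R g⟫_ℂ := adjoint_inner_left _ _ _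
      _ = ⟪R f, R (R g)⟫_ℂ := (hRinner _ _).symm
      _ = ⟪R f, g⟫_ℂ := by rw [hR2]
  have hPs : star P = P := by rw [star_eq_adjoint, hPsa]
  have hRs : star R = R := by rw [star_eq_adjoint, hRsa]
  have hqs : star q = q := by
    rw [hq_def]
    show star (Complex.I • (R * P)) = Complex.I • (R * P)
    rw [star_smul, star_mul, hPs, hRs, Complex.star_def, Complex.conj_I, hpr]
    module
  have hstarJ : star J = (starRingEnd ℂ α₀) • (1 : 𝕳 →L[ℂ] 𝕳) + (starRingEnd ℂ α₁) • P
      + (starRingEnd ℂ α₂) • R + (starRingEnd ℂ α₃) • q := by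
    rw [hJ']
    simp only [star_add, star_smul, star_one, hPs, hRs, hqs, Complex.star_def]
  constructor
  · rintro ⟨hinv, hinner, hne1, hneg1⟩
    have hJJ : J * J = 1 := by ext f; exact hinv f
    have hadj : star J * J = 1 := by
      ext f
      refine ext_inner_left ℂ fun g => ?_
      calc ⟪g, (star J * J) f⟫_ℂ = ⟪g, (ContinuousLinearMap.adjoint J) (J f)⟫_ℂ := by
            rw [star_eq_adjoint]; rfl
        _ = ⟪J g, J f⟫_ℂ := adjoint_inner_right _ _ _
        _ = ⟪g, f⟫_ℂ := hinner _ _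
        _ = ⟪g, (1 : 𝕳 →L[ℂ] 𝕳) f⟫_ℂ := rfl
    have hsJ : star J = J := by
      calc star J = star J * (J * J) := by rw [hJJ, mul_one]
        _ = (star J * J) * J := (mul_assoc _ _ _).symm
        _ = J := by rw [hadj, one_mul]
    have hdiff : (starRingEnd ℂ α₀ - α₀) • (1 : 𝕳 →L[ℂ] 𝕳) + (starRingEnd ℂ α₁ - α₁) • P
        + (starRingEnd ℂ α₂ - α₂) • R + (starRingEnd ℂ α₃ - α₃) • q = 0 := by
      have : (starRingEnd ℂ α₀ - α₀) • (1 : 𝕳 →L[ℂ] 𝕳) + (starRingEnd ℂ α₁ - α₁) • P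
          + (starRingEnd ℂ α₂ - α₂) • R + (starRingEnd ℂ α₃ - α₃) • q
          = ((starRingEnd ℂ α₀) • (1 : 𝕳 →L[ℂ] 𝕳) + (starRingEnd ℂ α₁) • P
            + (starRingEnd ℂ α₂) • R + (starRingEnd ℂ α₃) • q)
            - (α₀ • (1 : 𝕳 →L[ℂ] 𝕳) + α₁ • P + α₂ • R + α₃ • q) := by module
      rw [this, ← hstarJ, ← hJ', hsJ, sub_self]
    obtain ⟨e0, e1, e2, e3⟩ := key _ _ _ _ hdiff
    have hre1 : α₁.im = 0 := Complex.conj_eq_iff_im.mp (sub_eq_zero.mp e1)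
    have hre2 : α₂.im = 0 := Complex.conj_eq_iff_im.mp (sub_eq_zero.mp e2)
    have hre3 : α₃.im = 0 := Complex.conj_eq_iff_im.mp (sub_eq_zero.mp e3)
    have hre0 : α₀.im = 0 := Complex.conj_eq_iff_im.mp (sub_eq_zero.mp e0)
    have hcoef : (α₀ ^ 2 + α₁ ^ 2 + α₂ ^ 2 + α₃ ^ 2 - 1) • (1 : 𝕳 →L[ℂ] 𝕳)
        + (2 * α₀ * α₁) • P + (2 * α₀ * α₂) • R + (2 * α₀ * α₃) • q = 0 := by
      have : (α₀ ^ 2 + α₁ ^ 2 + α₂ ^ 2 + α₃ ^ 2 - 1) • (1 : 𝕳 →L[ℂ] 𝕳)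
          + (2 * α₀ * α₁) • P + (2 * α₀ * α₂) • R + (2 * α₀ * α₃) • q
          = ((α₀ ^ 2 + α₁ ^ 2 + α₂ ^ 2 + α₃ ^ 2) • (1 : 𝕳 →L[ℂ] 𝕳)
            + (2 * α₀ * α₁) • P + (2 * α₀ * α₂) • R + (2 * α₀ * α₃) • q)
            - 1 := by module
      rw [this, ← Jmul, hJJ, sub_self]
    obtain ⟨f0, f1, f2, f3⟩ := key _ _ _ _ hcoef
    by_cases hα₀ : α₀ = 0
    · refine ⟨hα₀, hre1, hre2, hre3, ?_⟩
      have := hα₀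
      linear_combination f0 - α₀ * hα₀
    · exfalso
      have h2ne : (2 : ℂ) ≠ 0 := two_ne_zero
      have hα1 : α₁ = 0 := by
        rcases mul_eq_zero.mp f1 with h' | h'
        · rcases mul_eq_zero.mp h' with h'' | h''
          · exact absurd h'' h2ne
          · exact absurd h'' hα₀
        · exact h'
      have hα2 : α₂ = 0 := by
        rcases mul_eq_zero.mp f2 with h' | h'
        · rcases mul_eq_zero.mp h' with h'' | h''
          · exact absurd h'' h2ne
          · exact absurd h'' hα₀
        · exact h'
      have hα3 : α₃ = 0 := by
        rcases mul_eq_zero.mp f3 with h' | h'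
        · rcases mul_eq_zero.mp h' with h'' | h''
          · exact absurd h'' h2ne
          · exact absurd h'' hα₀
        · exact h'
      have hsq : (α₀ - 1) * (α₀ + 1) = 0 := by
        linear_combination f0 - α₁ * hα1 - α₂ * hα2 - α₃ * hα3
      rcases mul_eq_zero.mp hsq with h' | h'
      · apply hne1
        have hα₀1 : α₀ = 1 := by linear_combination h'
        rw [hJ', hα₀1, hα1, hα2, hα3, one_smul, zero_smul, zero_smul, zero_smul,
          add_zero, add_zero, add_zero]
      · apply hneg1
        have hα₀1 : α₀ = -1 := by linear_combination h'
        rw [hJ', hα₀1, hα1, hα2, hα3, zero_smul, zero_smul, zero_smul,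
          add_zero, add_zero, add_zero, neg_smul, one_smul]
  · rintro ⟨h0, h1im, h2im, h3im, hsum⟩
    have hc1 : starRingEnd ℂ α₁ = α₁ := Complex.conj_eq_iff_im.mpr h1im
    have hc2 : starRingEnd ℂ α₂ = α₂ := Complex.conj_eq_iff_im.mpr h2im
    have hc3 : starRingEnd ℂ α₃ = α₃ := Complex.conj_eq_iff_im.mpr h3im
    have hJJ : J * J = 1 := by
      rw [Jmul, h0]
      have hs : (0 : ℂ) ^ 2 + α₁ ^ 2 + α₂ ^ 2 + α₃ ^ 2 = 1 := by linear_combination hsum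
      rw [hs]
      module
    have hinv : ∀ f, J (J f) = f := by
      intro f
      have := congrArg (fun T : 𝕳 →L[ℂ] 𝕳 => T f) hJJ
      simpa using this
    have hsJ : star J = J := by
      rw [hstarJ, h0, hc1, hc2, hc3, hJ', h0]
      simp
    have hadjJ : ContinuousLinearMap.adjoint J = J := by rw [← star_eq_adjoint, hsJ]
    refine ⟨hinv, ?_, ?_, ?_⟩
    · intro f g
      have h' := ContinuousLinearMap.adjoint_inner_left J (J g) f
      rw [hadjJ, hinv] at h'
      exact h'
    · intro h
      have hdiff : (α₀ - 1) • (1 : 𝕳 →L[ℂ] 𝕳) + α₁ • P + α₂ • R + α₃ • q = 0 := by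
        have : (α₀ - 1) • (1 : 𝕳 →L[ℂ] 𝕳) + α₁ • P + α₂ • R + α₃ • q
            = (α₀ • (1 : 𝕳 →L[ℂ] 𝕳) + α₁ • P + α₂ • R + α₃ • q) - 1 := by module
        rw [this, ← hJ', h, sub_self]
      obtain ⟨g0, g1, g2, g3⟩ := key _ _ _ _ hdiff
      rw [g1, g2, g3] at hsum
      simp at hsum
    · intro h
      have hdiff : (α₀ + 1) • (1 : 𝕳 →L[ℂ] 𝕳) + α₁ • P + α₂ • R + α₃ • q = 0 := by
        have : (α₀ + 1) • (1 : 𝕳 →L[ℂ] 𝕳) + α₁ • P + α₂ • R + α₃ • q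
            = (α₀ • (1 : 𝕳 →L[ℂ] 𝕳) + α₁ • P + α₂ • R + α₃ • q) - (-1) := by module
        rw [this, ← hJ', h, sub_self]
      obtain ⟨g0, g1, g2, g3⟩ := key _ _ _ _ hdiff
      rw [g1, g2, g3] at hsum
      simp at hsum
end

section
/- Let 𝔥 be a nonzero complex Hilbert space, 𝒫 and ℛ anti-commuting unitary involutions on 𝔥 (𝒫ℛ = −ℛ𝒫), and 𝒯 a conjugation on 𝔥 with 𝒫𝒯 = 𝒯𝒫 and ℛ𝒯 = 𝒯ℛ. Let J = α₁·𝒫 + α₂·ℛ + α₃·(iℛ𝒫) with α₁, α₂, α₃ ∈ ℝ and α₁² + α₂² + α₃² = 1 (so that J is a unitary involution different from ±I). Then J commutes with 𝒫𝒯 (i.e. J(𝒫𝒯f) = 𝒫𝒯(Jf) for all f ∈ 𝔥) if and only if there exists ξ ∈ [0, 2π) such that J = exp(iξℛ)𝒫. -/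
open scoped InnerProductSpace Real

lemma exp_I_smul_of_sq {A : Type*} [NormedRing A] [NormedAlgebra ℂ A] [CompleteSpace A]
    (r : A) (hr : r * r = 1) (ξ : ℝ) :
    NormedSpace.exp ((Complex.I * (ξ : ℂ)) • r)
      = (Complex.cos ξ) • (1 : A) + (Complex.sin ξ * Complex.I) • r := by
  have hr2 : r ^ 2 = 1 := by rw [sq, hr]
  rw [NormedSpace.exp_eq_tsum ℂ]
  refine HasSum.tsum_eq ?_
  refine HasSum.even_add_odd ?_ ?_
  · have hc := (Complex.hasSum_cos (ξ : ℂ)).smul_const (1 : A)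
    convert hc using 2 with n
    rw [smul_pow, pow_mul r 2, hr2, one_pow, smul_smul]
    congr 1
    rw [mul_pow, pow_mul, Complex.I_sq]
    field_simp
  · have hs := ((Complex.hasSum_sin (ξ : ℂ)).mul_right Complex.I).smul_const r
    convert hs using 2 with n
    rw [smul_pow, pow_succ r, pow_mul r 2, hr2, one_pow, one_mul, smul_smul]
    congr 1
    rw [mul_pow, pow_succ, pow_mul, Complex.I_sq]
    field_simp

/-- Lemma on `𝒫𝒯`-symmetric involutions in the Clifford algebra:
a non-trivial unitary involution `J = α₁𝒫 + α₂ℛ + α₃ iℛ𝒫` (with real coefficients of unit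
square sum) commutes with `𝒫𝒯` iff `J = exp(iξℛ)𝒫` for some `ξ ∈ [0, 2π)`. -/
theorem PT_symmetric_involution_iff_Pxi
    {𝕳 : Type*} [NormedAddCommGroup 𝕳] [InnerProductSpace ℂ 𝕳] [CompleteSpace 𝕳]
    [Nontrivial 𝕳]
    (P R : 𝕳 →L[ℂ] 𝕳)
    (hP2 : ∀ f, P (P f) = f)
    (hPinner : ∀ f g : 𝕳, ⟪P f, P g⟫_ℂ = ⟪f, g⟫_ℂ)
    (hR2 : ∀ f, R (R f) = f)
    (hRinner : ∀ f g : 𝕳, ⟪R f, R g⟫_ℂ = ⟪f, g⟫_ℂ)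
    (hanti : P ∘L R = -(R ∘L P))
    (T : 𝕳 → 𝕳)
    (hTadd : ∀ f g, T (f + g) = T f + T g)
    (hTsmul : ∀ (c : ℂ) (f : 𝕳), T (c • f) = (starRingEnd ℂ c) • T f)
    (hT2 : ∀ f, T (T f) = f)
    (hTinner : ∀ f g : 𝕳, ⟪T f, T g⟫_ℂ = ⟪g, f⟫_ℂ)
    (hPT : ∀ f, P (T f) = T (P f))
    (hRT : ∀ f, R (T f) = T (R f))
    (α₁ α₂ α₃ : ℝ)
    (hsum : α₁ ^ 2 + α₂ ^ 2 + α₃ ^ 2 = 1)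
    (J : 𝕳 →L[ℂ] 𝕳)
    (hJ : J = (α₁ : ℂ) • P + (α₂ : ℂ) • R + (α₃ : ℂ) • (Complex.I • (R ∘L P))) :
    (∀ f, J (P (T f)) = P (T (J f)))
      ↔ ∃ ξ ∈ Set.Ico (0 : ℝ) (2 * π),
          J = NormedSpace.exp ((Complex.I * (ξ : ℂ)) • R) ∘L P := by
  have hPR : ∀ f, P (R f) = -(R (P f)) := fun f => by
    simpa using DFunLike.congr_fun hanti f
  have hTP : ∀ f, T (P f) = P (T f) := fun f => (hPT f).symm
  have hTR : ∀ f, T (R f) = R (T f) := fun f => (hRT f).symm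
  have hTneg : ∀ f, T (-f) = -(T f) := fun f => by
    have := hTsmul (-1) f; simpa using this
  have hRmul : R * R = 1 := by
    ext f; simp [ContinuousLinearMap.mul_apply, hR2]
  have hexp : ∀ ξ : ℝ, NormedSpace.exp ((Complex.I * (ξ : ℂ)) • R)
      = (Complex.cos ξ) • (1 : 𝕳 →L[ℂ] 𝕳) + (Complex.sin ξ * Complex.I) • R :=
    exp_I_smul_of_sq R hRmul
  constructor
  · intro h
    -- derive α₂ = 0
    have key : ∀ g : 𝕳, ((2 * α₂ : ℝ) : ℂ) • g = 0 := by
      intro g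
      have h' := h (T (P (R g)))
      rw [hJ] at h'
      simp only [ContinuousLinearMap.add_apply, ContinuousLinearMap.smul_apply,
        ContinuousLinearMap.comp_apply, hTadd, hTsmul, hT2, hTP, hTR, hTneg,
        map_add, map_smul, map_neg, hPR, hP2, hR2, map_mul, Complex.conj_ofReal,
        Complex.conj_I, smul_neg, neg_neg] at h'
      push_cast
      linear_combination (norm := module) h'
    have hα₂ : α₂ = 0 := by
      obtain ⟨g, hg⟩ := exists_ne (0 : 𝕳)
      have := key g
      rcases smul_eq_zero.mp this with hc | hc
      · have : (2 * α₂ : ℝ) = 0 := by exact_mod_cast hc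
        linarith
      · exact absurd hc hg
    have hsum' : α₁ ^ 2 + α₃ ^ 2 = 1 := by rw [hα₂] at hsum; linarith
    set z : ℂ := (α₁ : ℂ) + (α₃ : ℂ) * Complex.I with hz
    have habs : ‖z‖ = 1 := by
      rw [hz, Complex.norm_def, Complex.normSq_add_mul_I, hsum', Real.sqrt_one]
    have hz0 : z ≠ 0 := by
      intro h0; rw [h0] at habs; simp at habs
    have hre : z.re = α₁ := by simp [hz]
    have him : z.im = α₃ := by simp [hz]
    have hcosθ : Real.cos z.arg = α₁ := by
      rw [Complex.cos_arg hz0, habs, hre, div_one]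
    have hsinθ : Real.sin z.arg = α₃ := by
      rw [Complex.sin_arg, habs, him, div_one]
    set θ := z.arg with hθ
    refine ⟨if 0 ≤ θ then θ else θ + 2 * π, ?_, ?_⟩
    · constructor
      · split_ifs with h0
        · exact h0
        · have := Complex.neg_pi_lt_arg z
          have := Real.pi_pos
          rw [← hθ] at *
          linarith
      · split_ifs with h0
        · have := Complex.arg_le_pi z
          have := Real.pi_pos
          rw [← hθ] at *
          linarith
        · push_neg at h0
          linarith
    · have hcos : Real.cos (if 0 ≤ θ then θ else θ + 2 * π) = α₁ := by
        split_ifs <;> simp [Real.cos_add_two_pi, hcosθ]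
      have hsin : Real.sin (if 0 ≤ θ then θ else θ + 2 * π) = α₃ := by
        split_ifs <;> simp [Real.sin_add_two_pi, hsinθ]
      rw [hexp, hJ, hα₂, ← Complex.ofReal_cos, ← Complex.ofReal_sin, hcos, hsin]
      ext f
      simp only [ContinuousLinearMap.add_apply, ContinuousLinearMap.smul_apply,
        ContinuousLinearMap.comp_apply, ContinuousLinearMap.one_apply,
        Complex.ofReal_zero, zero_smul, add_zero]
      module
  · rintro ⟨ξ, hξ, hJexp⟩
    intro f
    rw [hJexp, hexp]
    rw [← Complex.ofReal_cos, ← Complex.ofReal_sin]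
    simp only [ContinuousLinearMap.add_apply, ContinuousLinearMap.smul_apply,
      ContinuousLinearMap.comp_apply, ContinuousLinearMap.one_apply,
      hTadd, hTsmul, hTP, hTR, map_add, map_smul, map_mul,
      Complex.conj_ofReal, Complex.conj_I, hP2, hR2, hPR, map_neg, smul_neg, neg_neg,
      mul_neg, neg_smul]
end

section
/- Let 𝔥 be a complex Hilbert space, 𝒫 and ℛ anti-commuting unitary involutions on 𝔥 (𝒫ℛ = −ℛ𝒫), and 𝒯 a conjugation on 𝔥 with 𝒫𝒯 = 𝒯𝒫 and ℛ𝒯 = 𝒯ℛ. Let H be a closed densely defined 𝒫𝒯-symmetric operator on 𝔥, and let J = α₁·𝒫 + α₂·ℛ + α₃·(iℛ𝒫) with α₁, α₂, α₃ ∈ ℝ, α₁² + α₂² + α₃² = 1 and α₁² + α₃² ≠ 0. Suppose J maps D(H) into D(H*) and J(Hf) = H*(Jf) for all f ∈ D(H). Then, for ξ ∈ [0,2π) determined by cos ξ = α₁/√(1−α₂²) and sin ξ = α₃/√(1−α₂²), the operator 𝒫_ξ := exp(iξℛ)𝒫 satisfies: 𝒫_ξ maps D(H) into D(H*) and 𝒫_ξ(Hf)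 = H*(𝒫_ξ f) for all f ∈ D(H). -/
set_option maxHeartbeats 1600000

open scoped InnerProductSpace Real

lemma exp_I_smul_invol {𝕳 : Type*} [NormedAddCommGroup 𝕳] [InnerProductSpace ℂ 𝕳]
    [CompleteSpace 𝕳] (R : 𝕳 →L[ℂ] 𝕳) (hR2 : ∀ f, R (R f) = f) (ξ : ℝ) :
    NormedSpace.exp ((Complex.I * (ξ : ℂ)) • R) =
      ((Real.cos ξ : ℂ)) • (1 : 𝕳 →L[ℂ] 𝕳) + ((Real.sin ξ : ℂ) * Complex.I) • R := by
  have hRR : R ^ 2 = 1 := by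
    rw [sq]
    ext f
    exact hR2 f
  set x : 𝕳 →L[ℂ] 𝕳 := (Complex.I * (ξ : ℂ)) • R with hx
  have hxeven : ∀ k : ℕ, x ^ (2 * k) = (((-1 : ℂ) ^ k * (ξ : ℂ) ^ (2 * k))) • 1 := by
    intro k
    rw [hx, smul_pow, pow_mul R, hRR, one_pow]
    congr 1
    rw [pow_mul, mul_pow, Complex.I_sq, pow_mul]
    ring
  have hxodd : ∀ k : ℕ, x ^ (2 * k + 1) =
      (((-1 : ℂ) ^ k * (ξ : ℂ) ^ (2 * k + 1) * Complex.I)) • R := by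
    intro k
    rw [hx, smul_pow, pow_succ R, pow_mul R, hRR, one_pow, one_mul]
    congr 1
    rw [pow_succ, pow_mul, mul_pow, Complex.I_sq, pow_succ ((ξ : ℂ)) (2 * k),
      pow_mul ((ξ : ℂ))]
    ring
  have h1 : HasSum (fun n : ℕ => ((Nat.factorial n : ℂ)⁻¹) • x ^ n) (NormedSpace.exp x) :=
    NormedSpace.exp_series_hasSum_exp' x
  have hc : HasSum (fun k : ℕ => ((Nat.factorial (2 * k) : ℂ)⁻¹) • x ^ (2 * k))
      (((Real.cos ξ : ℂ)) • (1 : 𝕳 →L[ℂ] 𝕳)) := by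
    have h := (Complex.hasSum_cos (ξ : ℂ)).smul_const (1 : 𝕳 →L[ℂ] 𝕳)
    rw [show ((Real.cos ξ : ℂ)) = Complex.cos (ξ : ℂ) by rw [Complex.ofReal_cos]]
    convert h using 2 with k
    rw [hxeven k, smul_smul]
    congr 1
    field_simp
  have hs : HasSum (fun k : ℕ => ((Nat.factorial (2 * k + 1) : ℂ)⁻¹) • x ^ (2 * k + 1))
      (((Real.sin ξ : ℂ) * Complex.I) • R) := by
    have h := ((Complex.hasSum_sin (ξ : ℂ)).mul_right Complex.I).smul_const R
    rw [show ((Real.sin ξ : ℂ)) = Complex.sin (ξ : ℂ) by rw [Complex.ofReal_sin]]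
    convert h using 2 with k
    rw [hxodd k, smul_smul]
    congr 1
    field_simp
  exact h1.unique (hc.even_add_odd hs)

/-- Lemma: reduction to the involution `𝒫_ξ`: if a closed densely defined
`𝒫𝒯`-symmetric operator `H` is self-adjoint in the Krein space attached to the involution
`J = α₁𝒫 + α₂ℛ + α₃ iℛ𝒫` (i.e. `JH ⊆ H*J`), then it is self-adjoint in the Krein space
attached to `𝒫_ξ = exp(iξℛ)𝒫`, where `cos ξ = α₁/√(1-α₂²)` and `sin ξ = α₃/√(1-α₂²)`. -/
theorem krein_selfAdjoint_reduction_to_Pxi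
    {𝕳 : Type*} [NormedAddCommGroup 𝕳] [InnerProductSpace ℂ 𝕳] [CompleteSpace 𝕳]
    (P R : 𝕳 →L[ℂ] 𝕳)
    (hP2 : ∀ f, P (P f) = f)
    (hPinner : ∀ f g : 𝕳, ⟪P f, P g⟫_ℂ = ⟪f, g⟫_ℂ)
    (hR2 : ∀ f, R (R f) = f)
    (hRinner : ∀ f g : 𝕳, ⟪R f, R g⟫_ℂ = ⟪f, g⟫_ℂ)
    (hanti : P ∘L R = -(R ∘L P))
    (T : 𝕳 → 𝕳)
    (hTadd : ∀ f g, T (f + g) = T f + T g)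
    (hTsmul : ∀ (c : ℂ) (f : 𝕳), T (c • f) = (starRingEnd ℂ c) • T f)
    (hT2 : ∀ f, T (T f) = f)
    (hTinner : ∀ f g : 𝕳, ⟪T f, T g⟫_ℂ = ⟪g, f⟫_ℂ)
    (hPT : ∀ f, P (T f) = T (P f))
    (hRT : ∀ f, R (T f) = T (R f))
    (H : 𝕳 →ₗ.[ℂ] 𝕳)
    (hdense : Dense (H.domain : Set 𝕳))
    (hclosed : IsClosed (H.graph : Set (𝕳 × 𝕳)))
    (hsym : ∀ f : H.domain, ∃ hf : P (T (f : 𝕳)) ∈ H.domain,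
      P (T (H f)) = H ⟨P (T (f : 𝕳)), hf⟩)
    (α₁ α₂ α₃ : ℝ)
    (hsum : α₁ ^ 2 + α₂ ^ 2 + α₃ ^ 2 = 1)
    (hne : α₁ ^ 2 + α₃ ^ 2 ≠ 0)
    (J : 𝕳 →L[ℂ] 𝕳)
    (hJ : J = (α₁ : ℂ) • P + (α₂ : ℂ) • R + (α₃ : ℂ) • (Complex.I • (R ∘L P)))
    (hKrein : ∀ f : H.domain, ∃ hf : J (f : 𝕳) ∈ H.adjoint.domain,
      J (H f) = H.adjoint ⟨J (f : 𝕳), hf⟩)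
    (ξ : ℝ) (hξ : ξ ∈ Set.Ico (0 : ℝ) (2 * π))
    (hcos : Real.cos ξ = α₁ / Real.sqrt (1 - α₂ ^ 2))
    (hsin : Real.sin ξ = α₃ / Real.sqrt (1 - α₂ ^ 2))
    (Pξ : 𝕳 →L[ℂ] 𝕳)
    (hPξ : Pξ = NormedSpace.exp ((Complex.I * (ξ : ℂ)) • R) ∘L P) :
    ∀ f : H.domain, ∃ hf : Pξ (f : 𝕳) ∈ H.adjoint.domain,
      Pξ (H f) = H.adjoint ⟨Pξ (f : 𝕳), hf⟩ := by
  -- pointwise anticommutation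
  have hPR : ∀ x : 𝕳, P (R x) = -(R (P x)) := by
    intro x
    have h := ContinuousLinearMap.ext_iff.mp hanti x
    simpa using h
  -- `C := P ∘ T` is an antiunitary involution
  have hC2 : ∀ x : 𝕳, P (T (P (T x))) = x := by
    intro x
    have h1 : T (P (T x)) = P x := by rw [hPT x, hT2]
    rw [h1, hP2]
  have hCinner : ∀ u v : 𝕳, ⟪P (T u), P (T v)⟫_ℂ = ⟪v, u⟫_ℂ := fun u v => by
    rw [hPinner, hTinner]
  -- the adjoint is also `C`-symmetric
  have hadjC : ∀ y : H.adjoint.domain, ∃ hy : P (T (y : 𝕳)) ∈ H.adjoint.domain,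
      H.adjoint ⟨P (T (y : 𝕳)), hy⟩ = P (T (H.adjoint y)) := by
    intro y
    have key : ∀ x : H.domain,
        ⟪P (T (H.adjoint y)), (x : 𝕳)⟫_ℂ = ⟪P (T (y : 𝕳)), H x⟫_ℂ := by
      intro x
      obtain ⟨hx, hHx⟩ := hsym x
      calc ⟪P (T (H.adjoint y)), (x : 𝕳)⟫_ℂ
          = ⟪P (T (H.adjoint y)), P (T (P (T (x : 𝕳))))⟫_ℂ := by rw [hC2]
        _ = ⟪P (T (x : 𝕳)), H.adjoint y⟫_ℂ := hCinner _ _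
        _ = (starRingEnd ℂ) ⟪H.adjoint y, P (T (x : 𝕳))⟫_ℂ := (inner_conj_symm _ _).symm
        _ = (starRingEnd ℂ) ⟪(y : 𝕳), H ⟨P (T (x : 𝕳)), hx⟩⟫_ℂ := by
            rw [LinearPMap.adjoint_isFormalAdjoint hdense y ⟨P (T (x : 𝕳)), hx⟩]
        _ = ⟪H ⟨P (T (x : 𝕳)), hx⟩, (y : 𝕳)⟫_ℂ := inner_conj_symm _ _
        _ = ⟪P (T (H x)), (y : 𝕳)⟫_ℂ := by rw [hHx]
        _ = ⟪P (T (H x)), P (T (P (T (y : 𝕳))))⟫_ℂ := by rw [hC2]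
        _ = ⟪P (T (y : 𝕳)), H x⟫_ℂ := hCinner _ _
    have hy : P (T (y : 𝕳)) ∈ H.adjoint.domain :=
      LinearPMap.mem_adjoint_domain_of_exists _ ⟨P (T (H.adjoint y)), fun x => key x⟩
    exact ⟨hy, LinearPMap.adjoint_apply_eq hdense ⟨P (T (y : 𝕳)), hy⟩ (fun x => key x)⟩
  -- scalar facts
  set s : ℝ := Real.sqrt (1 - α₂ ^ 2) with hsdef
  have hs2 : 1 - α₂ ^ 2 = α₁ ^ 2 + α₃ ^ 2 := by linarith
  have hspos : 0 < s := by
    rw [hsdef]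
    apply Real.sqrt_pos.mpr
    rw [hs2]
    exact lt_of_le_of_ne (by positivity) (Ne.symm hne)
  have hsne : (s : ℂ) ≠ 0 := by
    exact_mod_cast Complex.ofReal_ne_zero.mpr hspos.ne'
  -- pointwise formulas
  have hPxi : ∀ x : 𝕳, Pξ x =
      (Real.cos ξ : ℂ) • P x + ((Real.sin ξ : ℂ) * Complex.I) • R (P x) := by
    intro x
    rw [hPξ, exp_I_smul_invol R hR2 ξ]
    simp
  have hJap : ∀ x : 𝕳, J x =
      (α₁ : ℂ) • P x + (α₂ : ℂ) • R x + (α₃ : ℂ) • (Complex.I • R (P x)) := by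
    intro x
    rw [hJ]
    simp
  have hJ' : ∀ x : 𝕳, P (T (J (P (T x)))) =
      (α₁ : ℂ) • P x - (α₂ : ℂ) • R x + (α₃ : ℂ) • (Complex.I • R (P x)) := by
    intro x
    rw [hJap]
    simp only [hP2, hTadd, hTsmul, map_add, map_smul, map_neg, ← hRT, ← hPT, hT2,
      Complex.conj_ofReal, map_mul, Complex.conj_I, hPR, hP2, hR2, smul_neg, neg_neg,
      neg_smul, mul_smul]
    module
  have hcomb : ∀ x : 𝕳, Pξ x =
      (((1 / (2 * s) : ℝ)) : ℂ) • (J x + P (T (J (P (T x))))) := by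
    intro x
    rw [hPxi x, hJap x, hJ' x, hcos, hsin]
    push_cast
    match_scalars <;> field_simp <;> ring
  -- assembly
  intro f
  obtain ⟨hJf, hJHf⟩ := hKrein f
  obtain ⟨hCf, hCHf⟩ := hsym f
  obtain ⟨hJfc, hJHfc⟩ := hKrein ⟨P (T (f : 𝕳)), hCf⟩
  obtain ⟨hy2, hy2eq⟩ := hadjC ⟨J (P (T (f : 𝕳))), hJfc⟩
  have e2 : P (T (J (P (T (H f))))) =
      H.adjoint ⟨P (T (J (P (T (f : 𝕳))))), hy2⟩ := by
    rw [hCHf, hJHfc, hy2eq]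
  have hmem : Pξ (f : 𝕳) ∈ H.adjoint.domain := by
    rw [hcomb (f : 𝕳)]
    exact Submodule.smul_mem _ _ (Submodule.add_mem _ hJf hy2)
  refine ⟨hmem, ?_⟩
  have hsub : (⟨Pξ (f : 𝕳), hmem⟩ : H.adjoint.domain) =
      (((1 / (2 * s) : ℝ)) : ℂ) •
        ((⟨J (f : 𝕳), hJf⟩ : H.adjoint.domain) + ⟨P (T (J (P (T (f : 𝕳))))), hy2⟩) := by
    apply Subtype.ext
    simp only [Submodule.coe_smul_of_tower, Submodule.coe_add]
    exact hcomb (f : 𝕳)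
  rw [hsub, LinearPMap.map_smul, LinearPMap.map_add, ← hJHf, ← e2]
  exact hcomb (H f)
end

section
/- Let 𝔥 be a nonzero complex Hilbert space, 𝒫 and ℛ anti-commuting unitary involutions on 𝔥 (𝒫ℛ = −ℛ𝒫), and 𝒯 a conjugation on 𝔥 with 𝒫𝒯 = 𝒯𝒫 and ℛ𝒯 = 𝒯ℛ. Let T = α₀·I + α₁·𝒫 + α₂·ℛ + α₃·(iℛ𝒫) with α₀, α₁, α₂, α₃ ∈ ℂ. Then T commutes with 𝒫𝒯 (i.e. T(𝒫𝒯f) = 𝒫𝒯(Tf) for all f ∈ 𝔥) if and only if α₀, α₁, α₃ are real and α₂ is purely imaginary. -/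
open scoped InnerProductSpace

lemma aux_pair {𝕳 : Type*} [NormedAddCommGroup 𝕳] [InnerProductSpace ℂ 𝕳] [Nontrivial 𝕳]
    (P R : 𝕳 →L[ℂ] 𝕳) (hP2 : ∀ f, P (P f) = f) (hR2 : ∀ f, R (R f) = f)
    (hPR : ∀ g, P (R g) = -(R (P g))) (a b : ℂ)
    (h : ∀ g, a • P g + b • g = 0) : a = 0 ∧ b = 0 := by
  obtain ⟨g, hg⟩ := exists_ne (0 : 𝕳)
  have hb : b = 0 := by
    have h1 := h (R g)
    rw [hPR] at h1
    have h2 := congrArg R (h g)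
    simp only [map_add, map_smul, map_zero] at h2
    have h3 : (b + b) • R g = 0 := by
      rw [add_smul]
      linear_combination (norm := module) h1 + h2
    have h4 : (b + b) • g = 0 := by
      have := congrArg R h3
      simpa [map_smul, hR2] using this
    rcases smul_eq_zero.mp h4 with h | h
    · have : (2 : ℂ) * b = 0 := by linear_combination h
      simpa using this
    · exact absurd h hg
  refine ⟨?_, hb⟩
  have h1 := h g
  rw [hb, zero_smul, add_zero] at h1
  have h2 := congrArg P h1
  simp only [map_smul, hP2, map_zero] at h2
  rcases smul_eq_zero.mp h2 with h | h
  · exact h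
  · exact absurd h hg

lemma aux_quad {𝕳 : Type*} [NormedAddCommGroup 𝕳] [InnerProductSpace ℂ 𝕳] [Nontrivial 𝕳]
    (P R : 𝕳 →L[ℂ] 𝕳) (hP2 : ∀ f, P (P f) = f) (hR2 : ∀ f, R (R f) = f)
    (hPR : ∀ g, P (R g) = -(R (P g))) (a b c d : ℂ)
    (h : ∀ g, a • g + b • P g + c • R g + d • R (P g) = 0) :
    a = 0 ∧ b = 0 ∧ c = 0 ∧ d = 0 := by
  have E2 : ∀ g, a • P g + b • g = 0 := by
    intro g
    have h2 := h (P g)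
    rw [hP2] at h2
    have h5 := congrArg P (h g)
    simp only [map_add, map_smul, map_zero, hP2, hPR] at h5
    have h6 : ((2:ℂ) * a) • P g + ((2:ℂ) * b) • g = 0 := by
      rw [two_mul, two_mul, add_smul, add_smul]
      linear_combination (norm := module) h2 + h5
    rw [mul_smul, mul_smul, ← smul_add] at h6
    rcases smul_eq_zero.mp h6 with h | h
    · norm_num at h
    · exact h
  have E1 : ∀ g, c • P g + d • g = 0 := by
    intro g
    have h2 := h (P g)
    rw [hP2] at h2
    have h5 := congrArg P (h g)
    simp only [map_add, map_smul, map_zero, hP2, hPR] at h5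
    have h7 : (c + c) • R (P g) + (d + d) • R g = 0 := by
      rw [add_smul, add_smul]
      linear_combination (norm := module) h2 - h5
    have h8 := congrArg R h7
    simp only [map_add, map_smul, map_zero, hR2] at h8
    have h9 : ((2:ℂ) * c) • P g + ((2:ℂ) * d) • g = 0 := by
      rw [two_mul, two_mul]; exact h8
    rw [mul_smul, mul_smul, ← smul_add] at h9
    rcases smul_eq_zero.mp h9 with h | h
    · norm_num at h
    · exact h
  obtain ⟨ha, hb⟩ := aux_pair P R hP2 hR2 hPR a b E2
  obtain ⟨hc, hd⟩ := aux_pair P R hP2 hR2 hPR c d E1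
  exact ⟨ha, hb, hc, hd⟩

theorem PT_symmetric_coefficients_iff
    {𝕳 : Type*} [NormedAddCommGroup 𝕳] [InnerProductSpace ℂ 𝕳] [CompleteSpace 𝕳]
    [Nontrivial 𝕳]
    (P R : 𝕳 →L[ℂ] 𝕳)
    (hP2 : ∀ f, P (P f) = f)
    (hPinner : ∀ f g : 𝕳, ⟪P f, P g⟫_ℂ = ⟪f, g⟫_ℂ)
    (hR2 : ∀ f, R (R f) = f)
    (hRinner : ∀ f g : 𝕳, ⟪R f, R g⟫_ℂ = ⟪f, g⟫_ℂ)
    (hanti : P ∘L R = -(R ∘L P))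
    (T : 𝕳 → 𝕳)
    (hTadd : ∀ f g, T (f + g) = T f + T g)
    (hTsmul : ∀ (c : ℂ) (f : 𝕳), T (c • f) = (starRingEnd ℂ c) • T f)
    (hT2 : ∀ f, T (T f) = f)
    (hTinner : ∀ f g : 𝕳, ⟪T f, T g⟫_ℂ = ⟪g, f⟫_ℂ)
    (hPT : ∀ f, P (T f) = T (P f))
    (hRT : ∀ f, R (T f) = T (R f))
    (α₀ α₁ α₂ α₃ : ℂ)
    (A : 𝕳 →L[ℂ] 𝕳)
    (hA : A = α₀ • (1 : 𝕳 →L[ℂ] 𝕳) + α₁ • P + α₂ • R + α₃ • (Complex.I • (R ∘L P))) :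
    (∀ f, A (P (T f)) = P (T (A f)))
      ↔ (α₀.im = 0 ∧ α₁.im = 0 ∧ α₂.re = 0 ∧ α₃.im = 0) := by
  have hPRpt : ∀ g, P (R g) = -(R (P g)) := by
    intro g
    have := ContinuousLinearMap.ext_iff.mp hanti g
    simpa using this
  have hA1 : ∀ x, A x = α₀ • x + α₁ • P x + α₂ • R x + (α₃ * Complex.I) • R (P x) := by
    intro x
    rw [hA]
    simp only [ContinuousLinearMap.add_apply, ContinuousLinearMap.smul_apply,
      ContinuousLinearMap.comp_apply, ContinuousLinearMap.one_apply, smul_smul]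
  have key : ∀ f,
      (α₁ - starRingEnd ℂ α₁) • T f + (α₀ - starRingEnd ℂ α₀) • P (T f)
        + ((α₃ - starRingEnd ℂ α₃) * Complex.I) • R (T f)
        + (α₂ + starRingEnd ℂ α₂) • R (P (T f))
      = A (P (T f)) - P (T (A f)) := by
    intro f
    have lhs : A (P (T f)) = α₀ • P (T f) + α₁ • T f + α₂ • R (P (T f))
        + (α₃ * Complex.I) • R (T f) := by
      rw [hA1, hP2]
    have step1 : T (A f) = (starRingEnd ℂ α₀) • T f + (starRingEnd ℂ α₁) • P (T f)
        + (starRingEnd ℂ α₂) • R (T f)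
        + (starRingEnd ℂ (α₃ * Complex.I)) • R (P (T f)) := by
      rw [hA1 f, hTadd, hTadd, hTadd, hTsmul, hTsmul, hTsmul, hTsmul, hPT, hRT, hRT]
    rw [lhs, step1]
    rw [map_add, map_add, map_add, map_smul, map_smul, map_smul, map_smul,
        hP2, hPRpt, hPRpt, hP2, map_mul, Complex.conj_I]
    module
  constructor
  · intro h
    have e : ∀ g, (α₁ - starRingEnd ℂ α₁) • g + (α₀ - starRingEnd ℂ α₀) • P g
        + ((α₃ - starRingEnd ℂ α₃) * Complex.I) • R g
        + (α₂ + starRingEnd ℂ α₂) • R (P g) = 0 := by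
      intro g
      have hk := key (T g)
      have hh := h (T g)
      rw [hT2] at hk hh
      rw [hk, hh, sub_self]
    obtain ⟨ha, hb, hc, hd⟩ := aux_quad P R hP2 hR2 hPRpt _ _ _ _ e
    refine ⟨?_, ?_, ?_, ?_⟩
    · have := congrArg Complex.im hb
      simp [Complex.sub_im, Complex.conj_im] at this
      linarith
    · have := congrArg Complex.im ha
      simp [Complex.sub_im, Complex.conj_im] at this
      linarith
    · have := congrArg Complex.re hd
      simp [Complex.add_re, Complex.conj_re] at this
      linarith
    · rcases mul_eq_zero.mp hc with h' | h'
      · have := congrArg Complex.im h'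
        simp [Complex.sub_im, Complex.conj_im] at this
        linarith
      · exact absurd h' Complex.I_ne_zero
  · rintro ⟨h0, h1, h2, h3⟩ f
    have hc0 : α₀ - starRingEnd ℂ α₀ = 0 := by
      rw [Complex.conj_eq_iff_im.mpr h0, sub_self]
    have hc1 : α₁ - starRingEnd ℂ α₁ = 0 := by
      rw [Complex.conj_eq_iff_im.mpr h1, sub_self]
    have hc3 : α₃ - starRingEnd ℂ α₃ = 0 := by
      rw [Complex.conj_eq_iff_im.mpr h3, sub_self]
    have hc2 : α₂ + starRingEnd ℂ α₂ = 0 := by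
      apply Complex.ext <;>
        simp [Complex.add_re, Complex.add_im, Complex.conj_re, Complex.conj_im, h2]
    have hk := key f
    rw [hc0, hc1, hc2, hc3, zero_mul, zero_smul, zero_smul, zero_smul, zero_smul] at hk
    simp only [add_zero, zero_add] at hk
    exact sub_eq_zero.mp hk.symm
end

section
/- Let 𝔥 be a nonzero complex Hilbert space, 𝒫 and ℛ anti-commuting unitary involutions on 𝔥 (𝒫ℛ = −ℛ𝒫), ξ, χ ∈ ℝ, 𝒫_ξ := exp(iξℛ)𝒫, and 𝒞 := exp(χ·iℛ𝒫_ξ)·𝒫_ξ. Let T = β₀·I + β₁·𝒫_ξ + β₂·ℛ with β₀, β₁ real and β₂ purely imaginary. Then 𝒞T = T𝒞 if and only if β₂ = i·β₁·tanh χ, equivalently if and only if there exist real numbers b₀, b₁ with T = b₀·I + b₁·𝒞. -/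
open scoped InnerProductSpace

open NormedSpace Complex in
lemma exp_smul_of_sq_eq_one' {𝓐 : Type*} [NormedRing 𝓐] [NormedAlgebra ℂ 𝓐] [CompleteSpace 𝓐]
    {A : 𝓐} (hA : A * A = 1) (c : ℂ) :
    NormedSpace.exp (c • A) = Complex.cosh c • (1 : 𝓐) + Complex.sinh c • A := by
  have hA2 : A ^ 2 = 1 := by rw [sq, hA]
  rw [exp_eq_tsum (𝕂 := ℂ)]
  refine HasSum.tsum_eq ?_
  refine HasSum.even_add_odd ?_ ?_
  · have := (Complex.hasSum_cosh c).smul_const (1 : 𝓐)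
    convert this using 2 with n
    rw [smul_pow, pow_mul A 2 n, hA2, one_pow, smul_smul]
    congr 1
    ring
  · have := (Complex.hasSum_sinh c).smul_const A
    convert this using 2 with n
    rw [smul_pow, pow_succ A, pow_mul A 2 n, hA2, one_pow, one_mul, smul_smul]
    congr 1
    ring

/-- for `𝒞 = exp(χ iℛ𝒫_ξ)𝒫_ξ` and `T = β₀I + β₁𝒫_ξ + β₂ℛ` with `β₀, β₁`
real and `β₂` purely imaginary, `𝒞T = T𝒞` iff `β₂ = i β₁ tanh χ`, equivalently iff
`T = b₀I + b₁𝒞` for some real `b₀, b₁`. -/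
theorem commutes_with_C_iff
    {𝕳 : Type*} [NormedAddCommGroup 𝕳] [InnerProductSpace ℂ 𝕳] [CompleteSpace 𝕳]
    [Nontrivial 𝕳]
    (P R : 𝕳 →L[ℂ] 𝕳)
    (hP2 : ∀ f, P (P f) = f)
    (hPinner : ∀ f g : 𝕳, ⟪P f, P g⟫_ℂ = ⟪f, g⟫_ℂ)
    (hR2 : ∀ f, R (R f) = f)
    (hRinner : ∀ f g : 𝕳, ⟪R f, R g⟫_ℂ = ⟪f, g⟫_ℂ)
    (hanti : P ∘L R = -(R ∘L P))
    (ξ χ : ℝ)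
    (Pξ : 𝕳 →L[ℂ] 𝕳)
    (hPξ : Pξ = NormedSpace.exp ((Complex.I * (ξ : ℂ)) • R) ∘L P)
    (C : 𝕳 →L[ℂ] 𝕳)
    (hC : C = NormedSpace.exp ((χ : ℂ) • (Complex.I • (R ∘L Pξ))) ∘L Pξ)
    (β₀ β₁ : ℝ) (β₂ : ℂ) (hβ₂ : β₂.re = 0)
    (T : 𝕳 →L[ℂ] 𝕳)
    (hT : T = (β₀ : ℂ) • (1 : 𝕳 →L[ℂ] 𝕳) + (β₁ : ℂ) • Pξ + β₂ • R) :
    (C ∘L T = T ∘L C ↔ β₂ = Complex.I * (β₁ : ℂ) * (Real.tanh χ : ℂ))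
    ∧ (C ∘L T = T ∘L C ↔ ∃ b₀ b₁ : ℝ,
        T = (b₀ : ℂ) • (1 : 𝕳 →L[ℂ] 𝕳) + (b₁ : ℂ) • C) := by
  have hmd : ∀ a b : 𝕳 →L[ℂ] 𝕳, a ∘L b = a * b := fun _ _ => rfl
  have hR1 : R * R = 1 := by ext f; exact hR2 f
  have hP1 : P * P = 1 := by ext f; exact hP2 f
  have hPR : P * R = -(R * P) := hanti
  have hPRx : ∀ x : 𝕳 →L[ℂ] 𝕳, P * (R * x) = -(R * (P * x)) := by
    intro x; rw [← mul_assoc, hPR, neg_mul, mul_assoc]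
  have hE : NormedSpace.exp ((Complex.I * (ξ : ℂ)) • R)
      = Complex.cosh (Complex.I * (ξ : ℂ)) • 1 + Complex.sinh (Complex.I * (ξ : ℂ)) • R :=
    exp_smul_of_sq_eq_one' hR1 _
  have hPξm : Pξ = (Complex.cosh (Complex.I * (ξ : ℂ)) • 1
      + Complex.sinh (Complex.I * (ξ : ℂ)) • R) * P := by rw [hPξ, hE, hmd]
  have hS1 : Pξ * Pξ = 1 := by
    rw [hPξm]
    simp only [mul_add, add_mul, smul_mul_assoc, mul_smul_comm, smul_smul, mul_one, one_mul,
      mul_assoc, hP1, hR1, hPR, hPRx, mul_neg, neg_mul, smul_neg, neg_neg]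
    match_scalars
    all_goals (first | ring1 | linear_combination (2:ℂ) * Complex.cosh_sq_sub_sinh_sq (Complex.I * (ξ : ℂ)) | linear_combination -Complex.cosh_sq_sub_sinh_sq (Complex.I * (ξ : ℂ)) | linear_combination Complex.cosh_sq_sub_sinh_sq (Complex.I * (ξ : ℂ)))
  have hSR : Pξ * R = -(R * Pξ) := by
    rw [hPξm]
    simp only [mul_add, add_mul, smul_mul_assoc, mul_smul_comm, smul_smul, mul_one, one_mul,
      mul_assoc, hP1, hR1, hPR, hPRx, mul_neg, neg_mul, smul_neg, neg_neg, neg_add]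
    try module
  -- auxiliary rewriting lemmas
  have hRRx : ∀ x : 𝕳 →L[ℂ] 𝕳, R * (R * x) = x := by
    intro x; rw [← mul_assoc, hR1, one_mul]
  have hSRx : ∀ x : 𝕳 →L[ℂ] 𝕳, Pξ * (R * x) = -(R * (Pξ * x)) := by
    intro x; rw [← mul_assoc, hSR, neg_mul, mul_assoc]
  -- closed form for C
  have hA' : (Complex.I • (R ∘L Pξ)) * (Complex.I • (R ∘L Pξ)) = 1 := by
    rw [hmd]
    simp only [smul_mul_assoc, mul_smul_comm, smul_smul, mul_assoc, hSR, hS1, hR1, hSRx, hRRx,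
      mul_neg, neg_mul, smul_neg, neg_neg, mul_one, one_mul, Complex.I_mul_I, neg_smul, one_smul]
  have hCm : C = Complex.cosh (χ : ℂ) • Pξ + (Complex.sinh (χ : ℂ) * Complex.I) • R := by
    rw [hC, exp_smul_of_sq_eq_one' hA', hmd, hmd]
    simp only [add_mul, smul_mul_assoc, mul_assoc, hS1, mul_one, one_mul, smul_smul]
  -- the commutator identity
  have heq : C ∘L T - T ∘L C
      = ((2 : ℂ) * (Complex.I * (β₁ : ℂ) * Complex.sinh (χ : ℂ) - β₂ * Complex.cosh (χ : ℂ)))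
        • (R * Pξ) := by
    rw [hmd, hmd, hCm, hT]
    simp only [mul_add, add_mul, smul_mul_assoc, mul_smul_comm, smul_smul, mul_one, one_mul,
      hS1, hSR, hR1, mul_neg, neg_mul, smul_neg, neg_neg]
    module
  have h1ne : (1 : 𝕳 →L[ℂ] 𝕳) ≠ 0 := by
    obtain ⟨x, hx⟩ := exists_ne (0 : 𝕳)
    intro h
    apply hx
    calc x = (1 : 𝕳 →L[ℂ] 𝕳) x := rfl
    _ = (0 : 𝕳 →L[ℂ] 𝕳) x := by rw [h]
    _ = 0 := rfl
  have hRS0 : (R * Pξ : 𝕳 →L[ℂ] 𝕳) ≠ 0 := by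
    intro h
    apply h1ne
    have : (R * Pξ) * (Pξ * R) = 1 := by
      rw [mul_assoc, ← mul_assoc Pξ, hS1, one_mul, hR1]
    rw [h, zero_mul] at this
    exact this.symm
  have hcoshne : Complex.cosh (χ : ℂ) ≠ 0 := by
    rw [← Complex.ofReal_cosh]
    exact_mod_cast (Real.cosh_pos (x := χ)).ne'
  have htanh : (Real.tanh χ : ℂ) = Complex.sinh (χ : ℂ) / Complex.cosh (χ : ℂ) := by
    rw [Complex.ofReal_tanh, Complex.tanh_eq_sinh_div_cosh]
  have hcomm : C ∘L T = T ∘L C ↔ β₂ = Complex.I * (β₁ : ℂ) * (Real.tanh χ : ℂ) := by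
    rw [← sub_eq_zero (a := C ∘L T), heq, smul_eq_zero]
    constructor
    · rintro (h0 | h0)
      · rw [htanh]
        have h2 : Complex.I * (β₁ : ℂ) * Complex.sinh (χ : ℂ) - β₂ * Complex.cosh (χ : ℂ) = 0 := by
          have := mul_eq_zero.mp h0
          rcases this with h | h
          · exact absurd h two_ne_zero
          · exact h
        field_simp
        linear_combination -h2
      · exact absurd h0 hRS0
    · intro h
      left
      rw [h, htanh]
      field_simp
      try ring
  refine ⟨hcomm, hcomm.trans ?_⟩
  constructor
  · intro hb
    refine ⟨β₀, β₁ / Real.cosh χ, ?_⟩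
    rw [hT, hCm, hb, htanh]
    have hcr : Complex.cosh (χ : ℂ) = (Real.cosh χ : ℂ) := (Complex.ofReal_cosh χ).symm
    have hsr : Complex.sinh (χ : ℂ) = (Real.sinh χ : ℂ) := (Complex.ofReal_sinh χ).symm
    have hcrne : (Real.cosh χ : ℂ) ≠ 0 := hcr ▸ hcoshne
    rw [hcr, hsr]
    push_cast
    match_scalars
    · ring
    · field_simp
    · field_simp
  · rintro ⟨b₀, b₁, hb⟩
    have hcc : C ∘L T = T ∘L C := by
      rw [hmd, hmd, hb]
      simp only [mul_add, add_mul, mul_smul_comm, smul_mul_assoc, mul_one, one_mul]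
    -- now derive the scalar identity from hcc via hcomm
    exact hcomm.mp hcc
end

section
/- Let σ₁ = [[0,1],[1,0]] and σ₃ = [[1,0],[0,−1]] be Pauli matrices, let ξ, χ, β₀, β₁ ∈ ℝ, and set σ₃ξ := exp(iξσ₁)σ₃, C := exp(χ·iσ₁σ₃ξ)·σ₃ξ, and T := β₀·I + β₁·C. Then both matrices exp(−χ·iσ₁σ₃ξ)·T and (1/2)·exp(−χ·iσ₁σ₃ξ) − exp(−χ·iσ₁σ₃ξ)·T are positive semidefinite if and only if 0 ≤ β₀ ≤ 1/2 and |β₁| ≤ min(1/2 − β₀, β₀). -/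
open scoped ComplexOrder

open Matrix

/-- Conjugation by an invertible matrix (with explicit inverse equal to the
conjugate transpose) preserves positive semidefiniteness, as an iff. -/
lemma psd_conj_iff_aux {n : Type*} [Fintype n] [DecidableEq n]
    (S S' N : Matrix n n ℂ) (h1 : S * S' = 1) (h2 : S' * S = 1) (hS : Sᴴ = S') :
    (S * N * S').PosSemidef ↔ N.PosSemidef := by
  constructor
  · intro h
    have h' : S'ᴴ = S := by rw [← hS, conjTranspose_conjTranspose]
    have key := h.mul_mul_conjTranspose_same S'
    rw [h'] at key
    have : S' * (S * N * S') * S = N := by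
      simp only [mul_assoc, h2, mul_one]
      rw [← mul_assoc, h2, one_mul]
    rwa [this] at key
  · intro h
    have key := h.mul_mul_conjTranspose_same S
    rwa [hS] at key

/-- Same as above, for a Hermitian conjugating matrix. -/
lemma psd_conj_herm_iff_aux {n : Type*} [Fintype n] [DecidableEq n]
    (S S' N : Matrix n n ℂ) (h1 : S * S' = 1) (h2 : S' * S = 1) (hS : Sᴴ = S) :
    (S * N * S).PosSemidef ↔ N.PosSemidef := by
  have hS' : S'ᴴ = S' := by
    have : S'ᴴ * (S * S') = S'ᴴ := by rw [h1, mul_one]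
    calc S' ᴴ = S'ᴴ * S * S' := by rw [mul_assoc, h1, mul_one]
    _ = (S * S')ᴴ * S' := by rw [conjTranspose_mul, hS]
    _ = S' := by rw [h1, conjTranspose_one, one_mul]
  constructor
  · intro h
    have key := h.mul_mul_conjTranspose_same S'
    rw [hS'] at key
    have : S' * (S * N * S) * S' = N := by
      simp only [mul_assoc, h1, mul_one]
      rw [← mul_assoc, h2, one_mul]
    rwa [this] at key
  · intro h
    have key := h.mul_mul_conjTranspose_same S
    rwa [hS] at key

/-- Conjugation of exp by an involution. -/
lemma exp_conj_invol_aux (V A : Matrix (Fin 2) (Fin 2) ℂ) (hV : V * V = 1) :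
    V * NormedSpace.exp A * V = NormedSpace.exp (V * A * V) := by
  let U : (Matrix (Fin 2) (Fin 2) ℂ)ˣ := ⟨V, V, hV, hV⟩
  have h := Matrix.exp_units_conj U A
  have hU : ((U⁻¹ : (Matrix (Fin 2) (Fin 2) ℂ)ˣ) : Matrix (Fin 2) (Fin 2) ℂ) = V := rfl
  have hU' : ((U : (Matrix (Fin 2) (Fin 2) ℂ)ˣ) : Matrix (Fin 2) (Fin 2) ℂ) = V := rfl
  rw [hU, hU'] at h
  exact h.symm

lemma diag_psd_aux (a b : ℝ) :
    ((a : ℂ) • (1 : Matrix (Fin 2) (Fin 2) ℂ) + (b : ℂ) • !![1, 0; 0, -1]).PosSemidef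
      ↔ (0 ≤ a + b ∧ 0 ≤ a - b) := by
  have h : (a : ℂ) • (1 : Matrix (Fin 2) (Fin 2) ℂ) + (b : ℂ) • !![1, 0; 0, -1]
      = Matrix.diagonal ![((a + b : ℝ) : ℂ), ((a - b : ℝ) : ℂ)] := by
    ext i j
    fin_cases i <;> fin_cases j <;>
      simp [Matrix.diagonal, Matrix.one_apply] <;> push_cast <;> ring
  rw [h, Matrix.posSemidef_diagonal_iff]
  rw [Fin.forall_fin_two]
  simp only [Matrix.cons_val_zero, Matrix.cons_val_one, Matrix.head_cons,
    Complex.zero_le_real]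

/-- for `σ₃ξ = exp(iξσ₁)σ₃`, `C = exp(χ iσ₁σ₃ξ)σ₃ξ` and `T = β₀I + β₁C`,
both `exp(-χ iσ₁σ₃ξ)T` and `(1/2)exp(-χ iσ₁σ₃ξ) - exp(-χ iσ₁σ₃ξ)T` are positive
semidefinite iff `0 ≤ β₀ ≤ 1/2` and `|β₁| ≤ min(1/2 - β₀, β₀)`. -/
theorem zero_perturbed_nonneg_iff
    (ξ χ β₀ β₁ : ℝ)
    (σ₁ σ₃ σ₃ξ C T E : Matrix (Fin 2) (Fin 2) ℂ)
    (hσ₁ : σ₁ = !![0, 1; 1, 0])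
    (hσ₃ : σ₃ = !![1, 0; 0, -1])
    (hσ₃ξ : σ₃ξ = NormedSpace.exp ((Complex.I * (ξ : ℂ)) • σ₁) * σ₃)
    (hC : C = NormedSpace.exp ((χ : ℂ) • (Complex.I • (σ₁ * σ₃ξ))) * σ₃ξ)
    (hT : T = (β₀ : ℂ) • (1 : Matrix (Fin 2) (Fin 2) ℂ) + (β₁ : ℂ) • C)
    (hE : E = NormedSpace.exp (-((χ : ℂ) • (Complex.I • (σ₁ * σ₃ξ))))) :
    ((E * T).PosSemidef ∧ ((1 / 2 : ℂ) • E - E * T).PosSemidef)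
      ↔ (0 ≤ β₀ ∧ β₀ ≤ 1 / 2 ∧ |β₁| ≤ min (1 / 2 - β₀) β₀) := by
  -- basic algebra of the Pauli matrices
  have h11 : σ₁ * σ₁ = 1 := by
    rw [hσ₁]; ext i j; fin_cases i <;> fin_cases j <;>
      simp [Matrix.mul_apply, Fin.sum_univ_two, Matrix.one_apply]
  have h33 : σ₃ * σ₃ = 1 := by
    rw [hσ₃]; ext i j; fin_cases i <;> fin_cases j <;>
      simp [Matrix.mul_apply, Fin.sum_univ_two, Matrix.one_apply]
  have h313 : σ₃ * σ₁ * σ₃ = -σ₁ := by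
    rw [hσ₁, hσ₃]; ext i j; fin_cases i <;> fin_cases j <;>
      simp [Matrix.mul_apply, Fin.sum_univ_two]
  have h31 : σ₃ * σ₁ = -(σ₁ * σ₃) := by
    rw [hσ₁, hσ₃]; ext i j; fin_cases i <;> fin_cases j <;>
      simp [Matrix.mul_apply, Fin.sum_univ_two]
  have h1H : σ₁ᴴ = σ₁ := by
    rw [hσ₁]; ext i j; fin_cases i <;> fin_cases j <;>
      simp [Matrix.conjTranspose_apply]
  have h3H : σ₃ᴴ = σ₃ := by
    rw [hσ₃]; ext i j; fin_cases i <;> fin_cases j <;>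
      simp [Matrix.conjTranspose_apply]
  -- the one-parameter group generated by σ₁
  set P : ℂ → Matrix (Fin 2) (Fin 2) ℂ := fun c => NormedSpace.exp (c • σ₁) with hPdef
  have hParg : ∀ (c d : ℂ), c = d → P c = P d := fun c d h => by rw [h]
  have hPadd : ∀ c d, P c * P d = P (c + d) := by
    intro c d
    rw [hPdef]
    simp only
    rw [add_smul, Matrix.exp_add_of_commute]
    exact ((Commute.refl σ₁).smul_left c).smul_right d
  have hP0 : P 0 = 1 := by simp [hPdef, NormedSpace.exp_zero]
  have hP3 : ∀ c, σ₃ * P c = P (-c) * σ₃ := by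
    intro c
    have h := exp_conj_invol_aux σ₃ (c • σ₁) h33
    have h2 : σ₃ * (c • σ₁) * σ₃ = (-c) • σ₁ := by
      rw [mul_smul_comm, smul_mul_assoc, h313, smul_neg, neg_smul]
    rw [h2] at h
    have h3 := congrArg (· * σ₃) h
    simp only [hPdef]
    simpa [mul_assoc, h33, neg_smul] using h3
  have hPH : ∀ c, (P c)ᴴ = P (starRingEnd ℂ c) := by
    intro c
    rw [hPdef]
    simp only
    rw [← Matrix.exp_conjTranspose]
    congr 1
    rw [Matrix.conjTranspose_smul, h1H]
    rfl
  -- facts about σ₃ξ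
  have hZ : σ₃ξ = P (Complex.I * (ξ : ℂ)) * σ₃ := hσ₃ξ
  have hZ1 : σ₃ξ * σ₃ξ = 1 := by
    rw [hZ, mul_assoc, ← mul_assoc σ₃, hP3, mul_assoc, h33, mul_one, hPadd,
      hParg _ 0 (by ring), hP0]
  have hZH : σ₃ξᴴ = σ₃ξ := by
    rw [hZ, Matrix.conjTranspose_mul, h3H, hPH, hP3,
      hParg _ (Complex.I * (ξ : ℂ)) (by simp [Complex.conj_I]), ← hZ]
  have hc : σ₁ * P (Complex.I * (ξ : ℂ)) = P (Complex.I * (ξ : ℂ)) * σ₁ := by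
    have h := exp_conj_invol_aux σ₁ ((Complex.I * (ξ : ℂ)) • σ₁) h11
    have h2 : σ₁ * ((Complex.I * (ξ : ℂ)) • σ₁) * σ₁ = (Complex.I * (ξ : ℂ)) • σ₁ := by
      rw [mul_smul_comm, smul_mul_assoc, mul_assoc, h11, mul_one]
    rw [h2] at h
    have h3 := congrArg (· * σ₁) h
    simp only [hPdef]
    simpa [mul_assoc, h11] using h3
  have hZ31 : σ₃ξ * σ₁ = -(σ₁ * σ₃ξ) := by
    calc σ₃ξ * σ₁ = P (Complex.I * (ξ : ℂ)) * (σ₃ * σ₁) := by rw [hZ, mul_assoc]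
    _ = -(P (Complex.I * (ξ : ℂ)) * σ₁ * σ₃) := by rw [h31, mul_neg, mul_assoc]
    _ = -(σ₁ * (P (Complex.I * (ξ : ℂ)) * σ₃)) := by rw [← hc, mul_assoc]
    _ = -(σ₁ * σ₃ξ) := by rw [← hZ]
  -- the one-parameter group generated by X = σ₁ σ₃ξ
  set X : Matrix (Fin 2) (Fin 2) ℂ := σ₁ * σ₃ξ with hXdef
  set Q : ℂ → Matrix (Fin 2) (Fin 2) ℂ := fun c => NormedSpace.exp (c • X) with hQdef
  have hQarg : ∀ (c d : ℂ), c = d → Q c = Q d := fun c d h => by rw [h]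
  have hQadd : ∀ c d, Q c * Q d = Q (c + d) := by
    intro c d
    rw [hQdef]
    simp only
    rw [add_smul, Matrix.exp_add_of_commute]
    exact ((Commute.refl X).smul_left c).smul_right d
  have hQ0 : Q 0 = 1 := by simp [hQdef, NormedSpace.exp_zero]
  have hZXZ : σ₃ξ * X * σ₃ξ = -X := by
    rw [hXdef, ← mul_assoc, hZ31]
    simp only [neg_mul, mul_assoc, hZ1, mul_one]
    rfl
  have hZQ : ∀ c, σ₃ξ * Q c = Q (-c) * σ₃ξ := by
    intro c
    have h := exp_conj_invol_aux σ₃ξ (c • X) hZ1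
    have h2 : σ₃ξ * (c • X) * σ₃ξ = (-c) • X := by
      rw [mul_smul_comm, smul_mul_assoc, hZXZ, smul_neg, neg_smul]
    rw [h2] at h
    have h3 := congrArg (· * σ₃ξ) h
    simp only [hQdef]
    simpa [mul_assoc, hZ1, neg_smul] using h3
  have hXH : Xᴴ = -X := by
    rw [hXdef, Matrix.conjTranspose_mul, hZH, h1H, hZ31]
  have hQH : ∀ c, (Q c)ᴴ = Q (-(starRingEnd ℂ c)) := by
    intro c
    rw [hQdef]
    simp only
    rw [← Matrix.exp_conjTranspose]
    congr 1
    rw [Matrix.conjTranspose_smul, hXH, smul_neg, neg_smul]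
    rfl
  -- rewrite E, C in terms of Q
  set a : ℂ := (χ : ℂ) * Complex.I with hadef
  have hE' : E = Q (-a) := by
    rw [hE, hQdef]
    simp only
    rw [smul_smul, ← hadef, neg_smul]
  have hC' : C = Q a * σ₃ξ := by
    rw [hC, hQdef]
    simp only
    rw [smul_smul, ← hadef]
  set S : Matrix (Fin 2) (Fin 2) ℂ := Q (-a / 2) with hSdef
  have hSS : S * S = E := by
    rw [hSdef, hQadd, hE', hQarg _ (-a) (by ring)]
  have hSinv : S * Q (a / 2) = 1 := by
    rw [hSdef, hQadd, hQarg _ 0 (by ring), hQ0]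
  have hSinv' : Q (a / 2) * S = 1 := by
    rw [hSdef, hQadd, hQarg _ 0 (by ring), hQ0]
  have hSH : Sᴴ = S := by
    rw [hSdef, hQH, hQarg _ (-a / 2) ?_]
    rw [hadef]
    simp [map_div₀, Complex.conj_I, map_ofNat]
    ring
  have hSZ : S * σ₃ξ = σ₃ξ * Q (a / 2) := by
    rw [hZQ (a / 2), hSdef, hQarg (-(a / 2)) (-a / 2) (by ring)]
  have hSZS : S * σ₃ξ * S = σ₃ξ := by
    rw [hSZ, mul_assoc, hSdef, hQadd, hQarg _ 0 (by ring), hQ0, mul_one]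
  have hEC : E * C = σ₃ξ := by
    rw [hE', hC', ← mul_assoc, hQadd, hQarg _ 0 (by ring), hQ0, one_mul]
  -- the two conjugation identities
  set N₁ : Matrix (Fin 2) (Fin 2) ℂ := (β₀ : ℂ) • 1 + (β₁ : ℂ) • σ₃ξ with hN₁def
  set N₂ : Matrix (Fin 2) (Fin 2) ℂ :=
    ((1 / 2 - β₀ : ℝ) : ℂ) • 1 + ((-β₁ : ℝ) : ℂ) • σ₃ξ with hN₂def
  have key1 : E * T = S * N₁ * S := by
    rw [hT, mul_add, mul_smul_comm, mul_smul_comm, mul_one, hEC, hN₁def]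
    rw [mul_add, add_mul, Matrix.mul_smul, Matrix.smul_mul, Matrix.mul_smul,
      Matrix.smul_mul, mul_one, hSS, hSZS]
  have key2 : (1 / 2 : ℂ) • E - E * T = S * N₂ * S := by
    rw [hN₂def, mul_add, add_mul, Matrix.mul_smul, Matrix.smul_mul, Matrix.mul_smul,
      Matrix.smul_mul, mul_one, hSS, hSZS, key1, hN₁def]
    rw [mul_add, add_mul, Matrix.mul_smul, Matrix.smul_mul, Matrix.mul_smul,
      Matrix.smul_mul, mul_one, hSS, hSZS]
    push_cast
    module
  -- diagonalize σ₃ξ by the unitary W = P(iξ/2)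
  set W : Matrix (Fin 2) (Fin 2) ℂ := P (Complex.I * (ξ : ℂ) / 2) with hWdef
  set W' : Matrix (Fin 2) (Fin 2) ℂ := P (-(Complex.I * (ξ : ℂ) / 2)) with hW'def
  have hWW' : W * W' = 1 := by
    rw [hWdef, hW'def, hPadd, hParg _ 0 (by ring), hP0]
  have hW'W : W' * W = 1 := by
    rw [hWdef, hW'def, hPadd, hParg _ 0 (by ring), hP0]
  have hWH : Wᴴ = W' := by
    rw [hWdef, hW'def, hPH, hParg _ (-(Complex.I * (ξ : ℂ) / 2)) ?_]
    simp [map_div₀, Complex.conj_I, map_ofNat]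
    ring
  have hWZ : W * σ₃ * W' = σ₃ξ := by
    rw [hW'def, mul_assoc, hP3, neg_neg, ← mul_assoc, hWdef, hPadd,
      hParg _ (Complex.I * (ξ : ℂ)) (by ring), ← hZ]
  have hconj1 : N₁ = W * ((β₀ : ℂ) • 1 + (β₁ : ℂ) • σ₃) * W' := by
    rw [hN₁def, mul_add, add_mul, Matrix.mul_smul, Matrix.smul_mul, Matrix.mul_smul,
      Matrix.smul_mul, mul_one, hWW', hWZ]
  have hconj2 : N₂ = W * (((1 / 2 - β₀ : ℝ) : ℂ) • 1 + ((-β₁ : ℝ) : ℂ) • σ₃) * W' := by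
    rw [hN₂def, mul_add, add_mul, Matrix.mul_smul, Matrix.smul_mul, Matrix.mul_smul,
      Matrix.smul_mul, mul_one, hWW', hWZ]
  -- assemble the equivalences
  have e1 : (E * T).PosSemidef ↔ (0 ≤ β₀ + β₁ ∧ 0 ≤ β₀ - β₁) := by
    rw [key1, psd_conj_herm_iff_aux S (Q (a / 2)) N₁ hSinv hSinv' hSH, hconj1,
      psd_conj_iff_aux W W' _ hWW' hW'W hWH, hσ₃]
    exact diag_psd_aux β₀ β₁
  have e2 : ((1 / 2 : ℂ) • E - E * T).PosSemidef
      ↔ (0 ≤ (1 / 2 - β₀) + (-β₁) ∧ 0 ≤ (1 / 2 - β₀) - (-β₁)) := by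
    rw [key2, psd_conj_herm_iff_aux S (Q (a / 2)) N₂ hSinv hSinv' hSH, hconj2,
      psd_conj_iff_aux W W' _ hWW' hW'W hWH, hσ₃]
    exact diag_psd_aux (1 / 2 - β₀) (-β₁)
  rw [e1, e2]
  constructor
  · rintro ⟨⟨h1, h2⟩, h3, h4⟩
    refine ⟨by linarith, by linarith, ?_⟩
    rw [le_min_iff]
    constructor <;> rw [abs_le] <;> constructor <;> linarith
  · rintro ⟨h1, h2, h3⟩
    rw [le_min_iff] at h3
    obtain ⟨h3, h4⟩ := h3
    rw [abs_le] at h3 h4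
    exact ⟨⟨by linarith [h4.1, h4.2], by linarith⟩, by linarith [h3.1], by linarith [h3.2]⟩
end

section
/- Let T and A be bounded linear operators on a complex Hilbert space 𝔥 with A invertible and AT = T*A. Let z ∈ ℂ be such that I − 2(1−iz)T is invertible, and set 𝕊(z) := (I − 2(1+iz)T)·(I − 2(1−iz)T)⁻¹. Then I − 2(1−i(−z̄))T = I − 2(1+i·conj(z))T is also invertible, and with 𝕊(−z̄) := (I − 2(1+i(−z̄))T)·(I − 2(1−i(−z̄))T)⁻¹ one has A·𝕊(z) = 𝕊(−z̄)*·A, where * denotes the Hilbert-space adjoint. -/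
/-- The analytically continued Lax–Phillips scattering matrix
`𝕊(z) = (I - 2(1+iz)T)(I - 2(1-iz)T)⁻¹` associated with a bounded operator `T`. -/
noncomputable def scatteringMatrix {𝕳 : Type*} [NormedAddCommGroup 𝕳]
    [InnerProductSpace ℂ 𝕳] [CompleteSpace 𝕳] (T : 𝕳 →L[ℂ] 𝕳) (z : ℂ) : 𝕳 →L[ℂ] 𝕳 :=
  (1 - (2 * (1 + Complex.I * z)) • T) * Ring.inverse (1 - (2 * (1 - Complex.I * z)) • T)

/-- if `A` is invertible and `AT = T*A`, then for any `z` with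
`I - 2(1-iz)T` invertible, `I - 2(1+i z̄)T` is invertible and `A 𝕊(z) = 𝕊(-z̄)* A`. -/
theorem krein_symmetry_of_scatteringMatrix
    {𝕳 : Type*} [NormedAddCommGroup 𝕳] [InnerProductSpace ℂ 𝕳] [CompleteSpace 𝕳]
    (T A : 𝕳 →L[ℂ] 𝕳) (hA : IsUnit A)
    (hATA : A ∘L T = ContinuousLinearMap.adjoint T ∘L A)
    (z : ℂ)
    (hz : IsUnit ((1 : 𝕳 →L[ℂ] 𝕳) - (2 * (1 - Complex.I * z)) • T)) :
    IsUnit ((1 : 𝕳 →L[ℂ] 𝕳) - (2 * (1 + Complex.I * starRingEnd ℂ z)) • T)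
    ∧ A * scatteringMatrix T z
        = ContinuousLinearMap.adjoint (scatteringMatrix T (-(starRingEnd ℂ z))) * A := by
  set S := ContinuousLinearMap.adjoint T with hS
  have hstarT : star T = S := rfl
  have hstarS : star S = T := by
    rw [hS, ContinuousLinearMap.star_eq_adjoint, ContinuousLinearMap.adjoint_adjoint]
  set b : ℂ := 2 * (1 + Complex.I * z) with hb
  set c : ℂ := 2 * (1 - Complex.I * z) with hc
  have hcb : starRingEnd ℂ c = 2 * (1 + Complex.I * starRingEnd ℂ z) := by
    simp only [hc, map_mul, map_sub, map_one, map_ofNat, Complex.conj_I]; ring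
  have hbb : starRingEnd ℂ b = 2 * (1 - Complex.I * starRingEnd ℂ z) := by
    simp only [hb, map_mul, map_add, map_one, map_ofNat, Complex.conj_I]; ring
  have hAT : A * T = S * A := hATA
  have hAsw : ∀ d : ℂ, A * (1 - d • T) = (1 - d • S) * A := by
    intro d
    rw [mul_sub, sub_mul, mul_one, one_mul, mul_smul_comm, smul_mul_assoc, hAT]
  -- invertibility of 1 - c • S
  have hu' : IsUnit ((1 : 𝕳 →L[ℂ] 𝕳) - c • S) := by
    have h1 : IsUnit (((1 : 𝕳 →L[ℂ] 𝕳) - c • S) * A) := by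
      rw [← hAsw c]; exact hA.mul hz
    have h2 : ((1 : 𝕳 →L[ℂ] 𝕳) - c • S) = ((1 - c • S) * A) * ↑hA.unit⁻¹ := by
      rw [mul_assoc, hA.mul_val_inv, mul_one]
    rw [h2]
    exact h1.mul hA.unit⁻¹.isUnit
  -- first conjunct
  have hfirst : IsUnit ((1 : 𝕳 →L[ℂ] 𝕳) - (2 * (1 + Complex.I * starRingEnd ℂ z)) • T) := by
    have := hu'.star
    rwa [star_sub, star_one, star_smul, hstarS, Complex.star_def, hcb] at this
  refine ⟨hfirst, ?_⟩
  -- rewrite the scattering matrices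
  have hmat : scatteringMatrix T (-(starRingEnd ℂ z))
      = (1 - starRingEnd ℂ b • T) * Ring.inverse (1 - starRingEnd ℂ c • T) := by
    unfold scatteringMatrix
    congr 3
    · rw [hbb]; ring
    · rw [hcb]; ring
  have hadj : ContinuousLinearMap.adjoint (scatteringMatrix T (-(starRingEnd ℂ z)))
      = Ring.inverse ((1 : 𝕳 →L[ℂ] 𝕳) - c • S) * (1 - b • S) := by
    rw [← ContinuousLinearMap.star_eq_adjoint, hmat, star_mul, ← Ring.inverse_star,
      star_sub, star_one, star_smul, star_sub, star_one, star_smul, hstarT]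
    simp only [Complex.star_def, Complex.conj_conj]
  rw [hadj]
  unfold scatteringMatrix
  rw [show (2 * (1 + Complex.I * z)) = b from rfl, show (2 * (1 - Complex.I * z)) = c from rfl]
  -- cancel on the right by the unit (1 - c • T)
  apply hz.mul_right_cancel
  have hcommSb : Commute ((1 : 𝕳 →L[ℂ] 𝕳) - c • S) (b • S) :=
    (Commute.one_left _).sub_left (((Commute.refl S).smul_right b).smul_left c)
  have hcomm : Commute ((1 : 𝕳 →L[ℂ] 𝕳) - c • S) (1 - b • S) :=
    (Commute.one_right _).sub_right hcommSb
  calc A * ((1 - b • T) * Ring.inverse (1 - c • T)) * (1 - c • T)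
      = A * (1 - b • T) := by
        rw [mul_assoc, mul_assoc, Ring.inverse_mul_cancel _ hz, mul_one]
    _ = (1 - b • S) * A := hAsw b
    _ = Ring.inverse (1 - c • S) * ((1 - c • S) * ((1 - b • S) * A)) := by
        rw [← mul_assoc, ← mul_assoc, Ring.inverse_mul_cancel _ hu', one_mul]
    _ = Ring.inverse (1 - c • S) * (1 - b • S) * A * (1 - c • T) := by
        rw [← mul_assoc ((1:𝕳 →L[ℂ] 𝕳) - c • S), hcomm.eq, mul_assoc, ← hAsw c]
        simp only [mul_assoc]
end

section
/- Let T be a bounded linear operator on a complex Hilbert space 𝔥 and let J be a conjugation on 𝔥 with JT = TJ. Let z ∈ ℂ be such that I − 2(1−iz)T is invertible, and set 𝕊(z) := (I − 2(1+iz)T)·(I − 2(1−iz)T)⁻¹. Then I − 2(1−i(−z̄))T is also invertible, and with 𝕊(−z̄) := (I − 2(1+i(−z̄))T)·(I − 2(1−i(−z̄))T)⁻¹ one has J·𝕊(z) = 𝕊(−z̄)·J. -/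
open scoped InnerProductSpace

/-- if a conjugation `J` commutes with `T`, then for any `z` with
`I - 2(1-iz)T` invertible, `I - 2(1-i(-z̄))T` is invertible and `J 𝕊(z) = 𝕊(-z̄) J`. -/
theorem conjugation_symmetry_of_scatteringMatrix
    {𝕳 : Type*} [NormedAddCommGroup 𝕳] [InnerProductSpace ℂ 𝕳] [CompleteSpace 𝕳]
    (T : 𝕳 →L[ℂ] 𝕳)
    (J : 𝕳 → 𝕳)
    (hJadd : ∀ f g, J (f + g) = J f + J g)
    (hJsmul : ∀ (c : ℂ) (f : 𝕳), J (c • f) = (starRingEnd ℂ c) • J f)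
    (hJ2 : ∀ f, J (J f) = f)
    (hJinner : ∀ f g : 𝕳, ⟪J f, J g⟫_ℂ = ⟪g, f⟫_ℂ)
    (hJT : ∀ f, J (T f) = T (J f))
    (z : ℂ)
    (hz : IsUnit ((1 : 𝕳 →L[ℂ] 𝕳) - (2 * (1 - Complex.I * z)) • T)) :
    IsUnit ((1 : 𝕳 →L[ℂ] 𝕳) - (2 * (1 - Complex.I * (-(starRingEnd ℂ z)))) • T)
    ∧ ∀ f, J (scatteringMatrix T z f) = scatteringMatrix T (-(starRingEnd ℂ z)) (J f) := by
  have hJneg : ∀ f : 𝕳, J (-f) = - J f := by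
    intro f
    have h := hJsmul (-1) f
    simpa using h
  have hJsub : ∀ f g : 𝕳, J (f - g) = J f - J g := by
    intro f g
    rw [sub_eq_add_neg, hJadd, hJneg, sub_eq_add_neg]
  have hJnorm : ∀ f : 𝕳, ‖J f‖ = ‖f‖ := by
    intro f
    have h := hJinner f f
    rw [inner_self_eq_norm_sq_to_K (𝕜 := ℂ), inner_self_eq_norm_sq_to_K (𝕜 := ℂ)] at h
    have h2 : (‖J f‖ : ℝ) ^ 2 = ‖f‖ ^ 2 := by exact_mod_cast h
    nlinarith [norm_nonneg (J f), norm_nonneg f]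
  have key : ∀ (c : ℂ) (f : 𝕳),
      J (((1 : 𝕳 →L[ℂ] 𝕳) - c • T) f) = ((1 : 𝕳 →L[ℂ] 𝕳) - (starRingEnd ℂ c) • T) (J f) := by
    intro c f
    simp only [ContinuousLinearMap.sub_apply, ContinuousLinearMap.one_apply,
      ContinuousLinearMap.smul_apply]
    rw [hJsub, hJsmul, hJT]
  set a : ℂ := 2 * (1 - Complex.I * z) with ha
  set a' : ℂ := 2 * (1 - Complex.I * (-(starRingEnd ℂ z))) with ha'
  have haa : starRingEnd ℂ a = a' := by
    simp only [ha, ha', map_mul, map_sub, map_one, Complex.conj_I, map_ofNat]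
    ring
  have haa' : starRingEnd ℂ a' = a := by
    rw [← haa, Complex.conj_conj]
  obtain ⟨u, hu⟩ := hz
  set A : 𝕳 →L[ℂ] 𝕳 := (1 : 𝕳 →L[ℂ] 𝕳) - a • T with hA
  set A' : 𝕳 →L[ℂ] 𝕳 := (1 : 𝕳 →L[ℂ] 𝕳) - a' • T with hA'
  set B : 𝕳 →L[ℂ] 𝕳 := ↑u⁻¹ with hB
  have hAB : A * B = 1 := by rw [← hu]; exact u.mul_inv
  have hBA : B * A = 1 := by rw [← hu]; exact u.inv_mul
  let Klin : 𝕳 →ₗ[ℂ] 𝕳 :=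
    { toFun := fun f => J (B (J f))
      map_add' := by
        intro f g
        show J (B (J (f + g))) = J (B (J f)) + J (B (J g))
        rw [hJadd, map_add, hJadd]
      map_smul' := by
        intro c f
        show J (B (J (c • f))) = c • J (B (J f))
        rw [hJsmul, map_smul, hJsmul, Complex.conj_conj] }
  have hKcont : ∀ f, ‖Klin f‖ ≤ ‖B‖ * ‖f‖ := by
    intro f
    calc ‖J (B (J f))‖ = ‖B (J f)‖ := hJnorm _
    _ ≤ ‖B‖ * ‖J f‖ := B.le_opNorm _
    _ = ‖B‖ * ‖f‖ := by rw [hJnorm]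
  let K : 𝕳 →L[ℂ] 𝕳 := Klin.mkContinuous ‖B‖ hKcont
  have hKapp : ∀ f, K f = J (B (J f)) := fun _ => rfl
  have hJA : ∀ f, J (A f) = A' (J f) := by
    intro f; rw [hA', ← haa]; exact key a f
  have hJA' : ∀ f, J (A' f) = A (J f) := by
    intro f; rw [hA, ← haa']; exact key a' f
  have hA'K : A' * K = 1 := by
    ext f
    simp only [ContinuousLinearMap.mul_apply, ContinuousLinearMap.one_apply, hKapp]
    rw [← hJA]
    have h1 : A (B (J f)) = J f := by
      have h := congrArg (fun (S : 𝕳 →L[ℂ] 𝕳) => S (J f)) hAB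
      simpa using h
    rw [h1, hJ2]
  have hKA' : K * A' = 1 := by
    ext f
    simp only [ContinuousLinearMap.mul_apply, ContinuousLinearMap.one_apply, hKapp]
    rw [hJA']
    have h1 : B (A (J f)) = J f := by
      have h := congrArg (fun (S : 𝕳 →L[ℂ] 𝕳) => S (J f)) hBA
      simpa using h
    rw [h1, hJ2]
  have hz' : IsUnit A' := isUnit_iff_exists.mpr ⟨K, hA'K, hKA'⟩
  refine ⟨hz', ?_⟩
  intro f
  have hzA : IsUnit A := ⟨u, hu⟩
  set b : ℂ := 2 * (1 + Complex.I * z) with hb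
  set b' : ℂ := 2 * (1 + Complex.I * (-(starRingEnd ℂ z))) with hb'
  have hbb : starRingEnd ℂ b = b' := by
    simp only [hb, hb', map_mul, map_add, map_one, Complex.conj_I, map_ofNat]
    ring
  set g : 𝕳 := Ring.inverse A f with hg
  have hAg : A g = f := by
    have h := congrArg (fun (S : 𝕳 →L[ℂ] 𝕳) => S f) (Ring.mul_inverse_cancel A hzA)
    simpa using h
  have hJg : J g = Ring.inverse A' (J f) := by
    have h1 : A' (J g) = J f := by rw [← hJA, hAg]
    have h3 := congrArg (fun (S : 𝕳 →L[ℂ] 𝕳) => S (J g)) (Ring.inverse_mul_cancel A' hz')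
    simp only [ContinuousLinearMap.mul_apply, ContinuousLinearMap.one_apply] at h3
    rw [← h1, h3]
  show J (scatteringMatrix T z f) = scatteringMatrix T (-(starRingEnd ℂ z)) (J f)
  rw [scatteringMatrix, scatteringMatrix]
  simp only [ContinuousLinearMap.mul_apply]
  rw [← ha, ← ha', ← hb, ← hb', ← hA, ← hA', ← hg, ← hJg, ← hbb]
  exact key b g
end

section
/- Let T be a bounded linear operator on a complex Hilbert space and let z ∈ ℂ with z ≠ 0 and 1 − iz ≠ 0 be such that I − 2(1−iz)T is invertible. Set 𝕊 := (I − 2(1+iz)T)·(I − 2(1−iz)T)⁻¹ and θ := (1+iz)/(1−iz). Then 𝕊 − θ·I is invertible and T = (1/(2(iz−1)))·(I − 𝕊)·(𝕊 − θ·I)⁻¹. -/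
/-- the parameter `T` can be recovered from the scattering matrix
`𝕊 = (I - 2(1+iz)T)(I - 2(1-iz)T)⁻¹` by `T = (1/(2(iz-1)))(I - 𝕊)(𝕊 - θ I)⁻¹`,
`θ = (1+iz)/(1-iz)`. -/
theorem parameter_from_scatteringMatrix
    {𝕳 : Type*} [NormedAddCommGroup 𝕳] [InnerProductSpace ℂ 𝕳] [CompleteSpace 𝕳]
    (T : 𝕳 →L[ℂ] 𝕳) (z : ℂ) (hz0 : z ≠ 0) (hz1 : 1 - Complex.I * z ≠ 0)
    (hz : IsUnit ((1 : 𝕳 →L[ℂ] 𝕳) - (2 * (1 - Complex.I * z)) • T))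
    (S : 𝕳 →L[ℂ] 𝕳)
    (hS : S = ((1 : 𝕳 →L[ℂ] 𝕳) - (2 * (1 + Complex.I * z)) • T)
        * Ring.inverse ((1 : 𝕳 →L[ℂ] 𝕳) - (2 * (1 - Complex.I * z)) • T))
    (θ : ℂ) (hθ : θ = (1 + Complex.I * z) / (1 - Complex.I * z)) :
    IsUnit (S - θ • (1 : 𝕳 →L[ℂ] 𝕳))
    ∧ T = (1 / (2 * (Complex.I * z - 1)))
        • (((1 : 𝕳 →L[ℂ] 𝕳) - S) * Ring.inverse (S - θ • (1 : 𝕳 →L[ℂ] 𝕳))) := by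
  obtain ⟨u, hu⟩ := hz
  have hinv : Ring.inverse ((1 : 𝕳 →L[ℂ] 𝕳) - (2 * (1 - Complex.I * z)) • T)
      = (↑u⁻¹ : 𝕳 →L[ℂ] 𝕳) := by rw [← hu, Ring.inverse_unit]
  have hmul : ((1 : 𝕳 →L[ℂ] 𝕳) - (2 * (1 - Complex.I * z)) • T) * ↑u⁻¹ = 1 := by
    rw [← hu]; exact u.mul_inv
  have hmul' : (↑u⁻¹ : 𝕳 →L[ℂ] 𝕳) * ((1 : 𝕳 →L[ℂ] 𝕳) - (2 * (1 - Complex.I * z)) • T) = 1 := by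
    rw [← hu]; exact u.inv_mul
  -- scalar facts
  have h1θ : 1 - θ = (-2 * Complex.I * z) / (1 - Complex.I * z) := by
    rw [hθ]; field_simp; ring
  have h1θ0 : (1 : ℂ) - θ ≠ 0 := by
    rw [h1θ]
    exact div_ne_zero (by simp [Complex.I_ne_zero, hz0]) hz1
  have hθcoef : θ * (2 * (1 - Complex.I * z)) = 2 * (1 + Complex.I * z) := by
    rw [hθ]; field_simp
  -- key identity : S - θ • 1 = (1 - θ) • ↑u⁻¹
  have hkey : S - θ • (1 : 𝕳 →L[ℂ] 𝕳) = (1 - θ) • (↑u⁻¹ : 𝕳 →L[ℂ] 𝕳) := by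
    have h1 : θ • (1 : 𝕳 →L[ℂ] 𝕳)
        = (θ • ((1 : 𝕳 →L[ℂ] 𝕳) - (2 * (1 - Complex.I * z)) • T)) * ↑u⁻¹ := by
      rw [smul_mul_assoc, hmul]
    rw [hS, hinv, h1, ← sub_mul, smul_sub, smul_smul, hθcoef]
    rw [sub_sub_sub_cancel_right, sub_smul, one_smul]
    rw [sub_mul, one_mul, smul_mul_assoc, one_mul]
  -- the inverse unit
  have hval : ((1 - θ) • (↑u⁻¹ : 𝕳 →L[ℂ] 𝕳)) * (((1 - θ)⁻¹) • (↑u : 𝕳 →L[ℂ] 𝕳)) = 1 := by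
    rw [smul_mul_smul_comm, mul_inv_cancel₀ h1θ0, u.inv_mul, one_smul]
  have hval' : (((1 - θ)⁻¹) • (↑u : 𝕳 →L[ℂ] 𝕳)) * ((1 - θ) • (↑u⁻¹ : 𝕳 →L[ℂ] 𝕳)) = 1 := by
    rw [smul_mul_smul_comm, inv_mul_cancel₀ h1θ0, u.mul_inv, one_smul]
  set v : (𝕳 →L[ℂ] 𝕳)ˣ := ⟨(1 - θ) • (↑u⁻¹ : 𝕳 →L[ℂ] 𝕳), ((1 - θ)⁻¹) • (↑u : 𝕳 →L[ℂ] 𝕳),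
    hval, hval'⟩ with hv
  have hSv : S - θ • (1 : 𝕳 →L[ℂ] 𝕳) = ↑v := hkey
  have hinv2 : Ring.inverse (S - θ • (1 : 𝕳 →L[ℂ] 𝕳))
      = ((1 - θ)⁻¹) • (↑u : 𝕳 →L[ℂ] 𝕳) := by
    rw [hSv, Ring.inverse_unit]; rfl
  refine ⟨⟨v, hSv.symm⟩, ?_⟩
  have h1S : (1 : 𝕳 →L[ℂ] 𝕳) - S = ((4 * Complex.I * z) • T) * ↑u⁻¹ := by
    rw [hS, hinv]
    nth_rewrite 1 [← hmul]
    rw [← sub_mul]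
    congr 1
    rw [sub_sub_sub_cancel_left, ← sub_smul]
    congr 1
    ring
  rw [hinv2, h1S, mul_assoc, mul_smul_comm, u.inv_mul, mul_smul_comm, mul_one,
    smul_smul, smul_smul]
  have hc : 1 / (2 * (Complex.I * z - 1)) * (1 - θ)⁻¹ * (4 * Complex.I * z) = 1 := by
    rw [h1θ]
    have h2 : Complex.I * z - 1 ≠ 0 := fun h => hz1 (by linear_combination -h)
    field_simp
    ring
  rw [hc, one_smul]
end

section
/- Let T be a bounded linear operator on a complex Hilbert space 𝔥 and let J be a conjugation on 𝔥. Suppose z ∈ ℂ with z ≠ 0 and 1 − iz ≠ 0 is such that both I − 2(1−iz)T and I − 2(1+i·conj(z))T are invertible, and set 𝕊(z) := (I − 2(1+iz)T)·(I − 2(1−iz)T)⁻¹ and 𝕊(−z̄) := (I − 2(1+i(−z̄))T)·(I − 2(1−i(−z̄))T)⁻¹. If J·𝕊(z) = 𝕊(−z̄)·J, then JT = TJ. -/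
open scoped InnerProductSpace

/-- conversely, if a conjugation `J` intertwines `𝕊(z)` and `𝕊(-z̄)`
(for one suitable `z`), then `J` commutes with `T`. -/
theorem conjugation_commutes_of_scatteringMatrix_symmetry
    {𝕳 : Type*} [NormedAddCommGroup 𝕳] [InnerProductSpace ℂ 𝕳] [CompleteSpace 𝕳]
    (T : 𝕳 →L[ℂ] 𝕳)
    (J : 𝕳 → 𝕳)
    (hJadd : ∀ f g, J (f + g) = J f + J g)
    (hJsmul : ∀ (c : ℂ) (f : 𝕳), J (c • f) = (starRingEnd ℂ c) • J f)
    (hJ2 : ∀ f, J (J f) = f)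
    (hJinner : ∀ f g : 𝕳, ⟪J f, J g⟫_ℂ = ⟪g, f⟫_ℂ)
    (z : ℂ) (hz0 : z ≠ 0) (hz1 : 1 - Complex.I * z ≠ 0)
    (hz : IsUnit ((1 : 𝕳 →L[ℂ] 𝕳) - (2 * (1 - Complex.I * z)) • T))
    (hz' : IsUnit ((1 : 𝕳 →L[ℂ] 𝕳) - (2 * (1 + Complex.I * starRingEnd ℂ z)) • T))
    (hsym : ∀ f, J (scatteringMatrix T z f)
        = scatteringMatrix T (-(starRingEnd ℂ z)) (J f)) :
    ∀ f, J (T f) = T (J f) := by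
  have hJsub : ∀ f g, J (f - g) = J f - J g := by
    intro f g
    have := hJadd (f - g) g
    simp only [sub_add_cancel] at this
    rw [this]; abel
  intro g
  set A : 𝕳 →L[ℂ] 𝕳 := (1 : 𝕳 →L[ℂ] 𝕳) - (2 * (1 - Complex.I * z)) • T with hA
  set A' : 𝕳 →L[ℂ] 𝕳 := (1 : 𝕳 →L[ℂ] 𝕳)
      - (2 * (1 + Complex.I * starRingEnd ℂ z)) • T with hA'
  set B := Ring.inverse A with hB
  set B' := Ring.inverse A' with hB'
  have hAB : A * B = 1 := Ring.mul_inverse_cancel _ hz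
  have hBA : B * A = 1 := Ring.inverse_mul_cancel _ hz
  have hA'B' : A' * B' = 1 := Ring.mul_inverse_cancel _ hz'
  set c : ℂ := 2 * (1 + Complex.I * starRingEnd ℂ z) with hc
  -- rewrite scattering matrices
  have hS1 : scatteringMatrix T z = 1 - (4 * Complex.I * z) • (T * B) := by
    have h1 : (1 : 𝕳 →L[ℂ] 𝕳) - (2 * (1 + Complex.I * z)) • T
        = A - (4 * Complex.I * z) • T := by
      rw [hA]; module
    rw [scatteringMatrix, ← hB, h1, sub_mul, smul_mul_assoc, hAB]
  have hS2 : scatteringMatrix T (-(starRingEnd ℂ z))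
      = 1 + (4 * Complex.I * starRingEnd ℂ z) • (T * B') := by
    have hd : (2 * (1 - Complex.I * (-(starRingEnd ℂ z)))) = c := by rw [hc]; ring
    have h1 : (1 : 𝕳 →L[ℂ] 𝕳) - (2 * (1 + Complex.I * (-(starRingEnd ℂ z)))) • T
        = A' + (4 * Complex.I * starRingEnd ℂ z) • T := by
      rw [hA']; module
    rw [scatteringMatrix, hd, ← hA', ← hB', h1, add_mul, smul_mul_assoc, hA'B']
  -- key intertwining identity
  have hc' : (4 * Complex.I * starRingEnd ℂ z) ≠ 0 := by
    simp [Complex.I_ne_zero, hz0]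
  have hkey : ∀ f, J (T (B f)) = T (B' (J f)) := by
    intro f
    have h := hsym f
    rw [hS1, hS2] at h
    simp only [ContinuousLinearMap.sub_apply, ContinuousLinearMap.add_apply,
      ContinuousLinearMap.one_apply, ContinuousLinearMap.smul_apply,
      ContinuousLinearMap.mul_apply] at h
    rw [hJsub, hJsmul] at h
    have hconj : starRingEnd ℂ (4 * Complex.I * z)
        = -(4 * Complex.I * starRingEnd ℂ z) := by
      have h4 : starRingEnd ℂ (4 : ℂ) = 4 := by exact_mod_cast map_ofNat (starRingEnd ℂ) _
      rw [map_mul, map_mul, h4, Complex.conj_I]; ring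
    rw [hconj, neg_smul, sub_neg_eq_add] at h
    have h2 : (4 * Complex.I * starRingEnd ℂ z) • J (T (B f))
        = (4 * Complex.I * starRingEnd ℂ z) • T (B' (J f)) := by
      have := add_left_cancel h
      exact this
    exact smul_right_injective 𝕳 hc' h2
  -- main computation
  set u := J (T g) with hu
  have hBAg : B (A g) = g := by
    have := congrArg (fun (X : 𝕳 →L[ℂ] 𝕳) => X g) hBA
    simpa using this
  have hJAg : J (A g) = J g - c • u := by
    have : A g = g - (2 * (1 - Complex.I * z)) • T g := by
      simp [hA, ContinuousLinearMap.sub_apply]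
    rw [this, hJsub, hJsmul]
    have : starRingEnd ℂ (2 * (1 - Complex.I * z)) = c := by
      have h2 : starRingEnd ℂ (2 : ℂ) = 2 := by exact_mod_cast map_ofNat (starRingEnd ℂ) _
      rw [map_mul, map_sub, map_mul, h2, Complex.conj_I, map_one, hc]; ring
    rw [this, hu]
  have hmain : u = T (B' (J g)) - c • T (B' u) := by
    have h := hkey (A g)
    rw [hBAg, hJAg, map_sub, map_sub, map_smul, map_smul] at h
    exact h
  -- A' commutes with T
  have hcomm : ∀ x, A' (T (B' x)) = T x := by
    intro x
    have hop : A' * (T * B') = T := by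
      have h1 : A' * T = T * A' := by
        rw [hA']
        simp only [sub_mul, mul_sub, one_mul, mul_one, smul_mul_assoc, mul_smul_comm]
      rw [← mul_assoc, h1, mul_assoc, hA'B', mul_one]
    have := congrArg (fun (X : 𝕳 →L[ℂ] 𝕳) => X x) hop
    simpa using this
  have hA'u : A' u = u - c • T u := by
    simp [hA', ContinuousLinearMap.sub_apply, hc]
  have h2 : A' u = T (J g) - c • T u := by
    calc A' u = A' (T (B' (J g)) - c • T (B' u)) := by rw [← hmain]
    _ = T (J g) - c • T u := by rw [map_sub, map_smul, hcomm, hcomm]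
  rw [hA'u] at h2
  have := sub_left_injective h2
  -- u - c • T u = T (J g) - c • T u  →  u = T (J g)
  have h3 : u = T (J g) := by
    have := congrArg (fun x => x + c • T u) h2
    simpa using this
  exact h3
end
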